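/- arXiv:2008.06469 — 5 statements merged into one kernel-verified Lean document; each statement's English description precedes it below -/
import Mathlib

section
/- Let B_G be the set of partitions β_1 ≤ β_2 ≤ … ≤ β_n into positive parts such that β_1 ∈ {1, 2} and for 2 ≤ i ≤ n: if β_i is odd then 2 ≤ β_i − β_{i−1} ≤ 3, and if β_i is even then 3 ≤ β_i − β_{i−1} ≤ 4. Then for all integers n ≥ 1 and h ≥ 0, the polynomial ∑ q^{β_1 + … + β_n}, summed over all partitions in B_G with exactly n parts and largest part equal to 2n + 2h − 1, equals q^{n² + h² + 2h} · [n−1 choose h]_{q²}. -/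
open Finset PowerSeries

noncomputable def qPoch (j n : ℕ) : PowerSeries ℚ :=
  ∏ i ∈ Finset.range n, (1 - (PowerSeries.X : PowerSeries ℚ) ^ (j * (i + 1)))

noncomputable def gaussBinom (j A B : ℕ) : PowerSeries ℚ :=
  if B ≤ A then qPoch j A * (qPoch j B)⁻¹ * (qPoch j (A - B))⁻¹ else 0

lemma qPoch_succ (j n : ℕ) :
    qPoch j (n + 1) = qPoch j n * (1 - (PowerSeries.X : PowerSeries ℚ) ^ (j * (n + 1))) := by
  simp [qPoch, Finset.prod_range_succ]

lemma constantCoeff_qPoch (j n : ℕ) (hj : 0 < j) :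
    PowerSeries.constantCoeff (qPoch j n) = 1 := by
  rw [qPoch, map_prod]
  rw [Finset.prod_eq_one]
  intro i _
  have : j * (i + 1) ≠ 0 := by positivity
  simp [this]

lemma qPoch_mul_inv (j n : ℕ) (hj : 0 < j) : qPoch j n * (qPoch j n)⁻¹ = 1 :=
  PowerSeries.mul_inv_cancel _ (by rw [constantCoeff_qPoch j n hj]; norm_num)

lemma qPoch_ne_zero (j n : ℕ) (hj : 0 < j) : qPoch j n ≠ 0 := by
  intro h
  have := constantCoeff_qPoch j n hj
  rw [h] at this
  simp at this

lemma gaussBinom_mul (j A B : ℕ) (hj : 0 < j) (h : B ≤ A) :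
    gaussBinom j A B * (qPoch j B * qPoch j (A - B)) = qPoch j A := by
  rw [gaussBinom, if_pos h]
  have h1 := qPoch_mul_inv j B hj
  have h2 := qPoch_mul_inv j (A - B) hj
  calc qPoch j A * (qPoch j B)⁻¹ * (qPoch j (A - B))⁻¹ * (qPoch j B * qPoch j (A - B))
      = qPoch j A * (qPoch j B * (qPoch j B)⁻¹) * (qPoch j (A - B) * (qPoch j (A - B))⁻¹) := by
        ring
    _ = qPoch j A := by rw [h1, h2]; ring

lemma gaussBinom_pascal (j A B : ℕ) (hj : 0 < j) (hB : 1 ≤ B) :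
    gaussBinom j (A + 1) B = gaussBinom j A B
      + (PowerSeries.X : PowerSeries ℚ) ^ (j * (A + 1 - B)) * gaussBinom j A (B - 1) := by
  rcases lt_trichotomy B (A + 1) with hlt | heq | hgt
  · have hBA : B ≤ A := by omega
    have hc : qPoch j B * qPoch j (A + 1 - B) ≠ 0 :=
      mul_ne_zero (qPoch_ne_zero j _ hj) (qPoch_ne_zero j _ hj)
    apply mul_right_cancel₀ hc
    have e2 : qPoch j (A + 1 - B) = qPoch j (A - B) * (1 - X ^ (j * (A + 1 - B))) := by
      have : A + 1 - B = (A - B) + 1 := by omega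
      rw [this, qPoch_succ]
    have e3 : qPoch j B = qPoch j (B - 1) * (1 - X ^ (j * B)) := by
      have : B = (B - 1) + 1 := by omega
      nth_rewrite 1 [this]
      rw [qPoch_succ]
      have he : j * (B - 1 + 1) = j * B := by congr 1; omega
      rw [he]
    have e4 : A - (B - 1) = A + 1 - B := by omega
    have e5 : j * (A + 1 - B) + j * B = j * (A + 1) := by
      rw [← Nat.mul_add]
      congr 1
      omega
    have lhs : gaussBinom j (A + 1) B * (qPoch j B * qPoch j (A + 1 - B)) = qPoch j (A + 1) := by
      have := gaussBinom_mul j (A + 1) B hj (by omega)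
      rwa [show A + 1 - B = A + 1 - B from rfl] at this
    rw [lhs, add_mul]
    have t1 : gaussBinom j A B * (qPoch j B * qPoch j (A + 1 - B))
        = qPoch j A * (1 - X ^ (j * (A + 1 - B))) := by
      rw [e2]
      calc gaussBinom j A B * (qPoch j B * (qPoch j (A - B) * (1 - X ^ (j * (A + 1 - B)))))
          = gaussBinom j A B * (qPoch j B * qPoch j (A - B)) * (1 - X ^ (j * (A + 1 - B))) := by
            ring
        _ = qPoch j A * (1 - X ^ (j * (A + 1 - B))) := by rw [gaussBinom_mul j A B hj hBA]
    have t2 : X ^ (j * (A + 1 - B)) * gaussBinom j A (B - 1) * (qPoch j B * qPoch j (A + 1 - B))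
        = X ^ (j * (A + 1 - B)) * (qPoch j A * (1 - X ^ (j * B))) := by
      rw [e3]
      calc X ^ (j * (A + 1 - B)) * gaussBinom j A (B - 1) *
            (qPoch j (B - 1) * (1 - X ^ (j * B)) * qPoch j (A + 1 - B))
          = X ^ (j * (A + 1 - B)) *
              (gaussBinom j A (B - 1) * (qPoch j (B - 1) * qPoch j (A - (B - 1)))) *
              (1 - X ^ (j * B)) := by rw [e4]; ring
        _ = X ^ (j * (A + 1 - B)) * (qPoch j A * (1 - X ^ (j * B))) := by
            rw [gaussBinom_mul j A (B - 1) hj (by omega)]; ring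
    rw [t1, t2, qPoch_succ]
    symm
    have : (X : PowerSeries ℚ) ^ (j * (A + 1 - B)) * X ^ (j * B) = X ^ (j * (A + 1)) := by
      rw [← pow_add, e5]
    calc qPoch j A * (1 - X ^ (j * (A + 1 - B)))
          + X ^ (j * (A + 1 - B)) * (qPoch j A * (1 - X ^ (j * B)))
        = qPoch j A * (1 - X ^ (j * (A + 1 - B)) * X ^ (j * B)) := by ring
      _ = qPoch j A * (1 - X ^ (j * (A + 1))) := by rw [this]
  · subst heq
    have h1 : gaussBinom j (A + 1) (A + 1) = 1 := by
      rw [gaussBinom, if_pos le_rfl]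
      simp only [Nat.sub_self]
      have : qPoch j 0 = 1 := by simp [qPoch]
      rw [this]
      have := qPoch_mul_inv j (A + 1) hj
      simpa using this
    have h2 : gaussBinom j A (A + 1) = 0 := by
      rw [gaussBinom, if_neg (by omega)]
    have h3 : gaussBinom j A (A + 1 - 1) = 1 := by
      simp only [Nat.add_sub_cancel]
      rw [gaussBinom, if_pos le_rfl]
      simp only [Nat.sub_self]
      have : qPoch j 0 = 1 := by simp [qPoch]
      rw [this]
      have := qPoch_mul_inv j A hj
      simpa using this
    rw [h1, h2, h3]
    simp [Nat.sub_self]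
  · have h1 : gaussBinom j (A + 1) B = 0 := by rw [gaussBinom, if_neg (by omega)]
    have h2 : gaussBinom j A B = 0 := by rw [gaussBinom, if_neg (by omega)]
    have h3 : gaussBinom j A (B - 1) = 0 := by rw [gaussBinom, if_neg (by omega)]
    rw [h1, h2, h3]
    ring

noncomputable def Fq (j A B : ℕ) : PowerSeries ℚ :=
  ∑ S ∈ (Finset.range A).powersetCard B, (PowerSeries.X : PowerSeries ℚ) ^ (j * ∑ i ∈ S, i)

lemma Fq_succ (j A B : ℕ) (hB : 1 ≤ B) :
    Fq j (A + 1) B = Fq j A B + (PowerSeries.X : PowerSeries ℚ) ^ (j * A) * Fq j A (B - 1) := by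
  have hA : A ∉ Finset.range A := by simp
  have hr : Finset.range (A + 1) = insert A (Finset.range A) := by
    rw [Finset.range_add_one]
  obtain ⟨B', rfl⟩ : ∃ B', B = B' + 1 := ⟨B - 1, by omega⟩
  have hdisj : Disjoint ((Finset.range A).powersetCard (B' + 1))
      (((Finset.range A).powersetCard B').image (insert A)) := by
    rw [Finset.disjoint_right]
    intro S hS hS'
    rw [Finset.mem_image] at hS
    obtain ⟨T, hT, rfl⟩ := hS
    rw [Finset.mem_powersetCard] at hS'
    exact hA (hS'.1 (Finset.mem_insert_self A T))
  have hinj : ∀ S ∈ (Finset.range A).powersetCard B',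
      ∀ T ∈ (Finset.range A).powersetCard B', insert A S = insert A T → S = T := by
    intro S hS T hT hST
    rw [Finset.mem_powersetCard] at hS hT
    have hAS : A ∉ S := fun hc => hA (hS.1 hc)
    have hAT : A ∉ T := fun hc => hA (hT.1 hc)
    ext x
    constructor
    · intro hx
      have h2 : x ∈ insert A S := Finset.mem_insert_of_mem hx
      rw [hST] at h2
      rcases Finset.mem_insert.mp h2 with rfl | h
      · exact absurd hx hAS
      · exact h
    · intro hx
      have h2 : x ∈ insert A T := Finset.mem_insert_of_mem hx
      rw [← hST] at h2
      rcases Finset.mem_insert.mp h2 with rfl | h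
      · exact absurd hx hAT
      · exact h
  rw [Fq, hr, Finset.powersetCard_succ_insert hA, Finset.sum_union hdisj]
  congr 1
  rw [Finset.sum_image hinj, Fq, Nat.add_sub_cancel, Finset.mul_sum]
  apply Finset.sum_congr rfl
  intro S hS
  have hAS : A ∉ S := by
    rw [Finset.mem_powersetCard] at hS
    exact fun hc => hA (hS.1 hc)
  rw [Finset.sum_insert hAS, ← pow_add, Nat.mul_add]

lemma gauss_eq_F (j : ℕ) (hj : 0 < j) : ∀ A B : ℕ,
    gaussBinom j A B * (PowerSeries.X : PowerSeries ℚ) ^ (j * B.choose 2) = Fq j A B := by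
  intro A
  induction A with
  | zero =>
    intro B
    rcases Nat.eq_zero_or_pos B with rfl | hB
    · have h0 : qPoch j 0 = 1 := by simp [qPoch]
      rw [gaussBinom, if_pos le_rfl]
      simp [h0, Fq]
    · rw [gaussBinom, if_neg (by omega), Fq]
      rw [Finset.range_zero, Finset.powersetCard_eq_empty.mpr (by simp; omega)]
      simp
  | succ A ih =>
    intro B
    rcases Nat.eq_zero_or_pos B with rfl | hB
    · have h0 : qPoch j 0 = 1 := by simp [qPoch]
      rw [gaussBinom, if_pos (by omega)]
      rw [Fq]
      simp only [Finset.powersetCard_zero]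
      rw [Nat.sub_zero, h0]
      have h2 := qPoch_mul_inv j (A + 1) hj
      simp [h2]
    · rcases le_or_gt B (A + 1) with hBA | hBA
      · rw [gaussBinom_pascal j A B hj hB, Fq_succ j A B hB, add_mul, ih B]
        congr 1
        have hch : B.choose 2 = (B - 1).choose 2 + (B - 1) := by
          obtain ⟨B', rfl⟩ : ∃ B', B = B' + 1 := ⟨B - 1, by omega⟩
          rw [Nat.add_sub_cancel, Nat.choose_succ_succ, Nat.choose_one_right,
            show Nat.succ 1 = 2 from rfl]
          omega
        have hexp : j * (A + 1 - B) + j * B.choose 2 = j * A + j * (B - 1).choose 2 := by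
          rw [← Nat.mul_add, ← Nat.mul_add]
          congr 1
          omega
        calc X ^ (j * (A + 1 - B)) * gaussBinom j A (B - 1) * X ^ (j * B.choose 2)
            = X ^ (j * (A + 1 - B) + j * B.choose 2) * gaussBinom j A (B - 1) := by
              rw [pow_add]; ring
          _ = X ^ (j * A + j * (B - 1).choose 2) * gaussBinom j A (B - 1) := by rw [hexp]
          _ = X ^ (j * A) * (gaussBinom j A (B - 1) * X ^ (j * (B - 1).choose 2)) := by
              rw [pow_add]; ring
          _ = X ^ (j * A) * Fq j A (B - 1) := by rw [ih (B - 1)]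
      · rw [gaussBinom, if_neg (by omega), Fq]
        rw [Finset.powersetCard_eq_empty.mpr (by simp; omega)]
        simp

lemma reflect_mem (A B : ℕ) (S : Finset ℕ) (hS : S ∈ (Finset.range A).powersetCard B) :
    S.image (fun x => A - 1 - x) ∈ (Finset.range A).powersetCard B := by
  rw [Finset.mem_powersetCard] at hS ⊢
  have hlt : ∀ x ∈ S, x < A := fun x hx => Finset.mem_range.mp (hS.1 hx)
  constructor
  · intro y hy
    rw [Finset.mem_image] at hy
    obtain ⟨x, hx, rfl⟩ := hy
    exact Finset.mem_range.mpr (by have := hlt x hx; omega)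
  · rw [Finset.card_image_of_injOn, hS.2]
    intro x hx y hy hxy
    have hxy' : A - 1 - x = A - 1 - y := hxy
    have := hlt x hx; have := hlt y hy
    omega

lemma reflect_involutive (A B : ℕ) (S : Finset ℕ) (hS : S ∈ (Finset.range A).powersetCard B) :
    (S.image (fun x => A - 1 - x)).image (fun x => A - 1 - x) = S := by
  rw [Finset.mem_powersetCard] at hS
  have hlt : ∀ x ∈ S, x < A := fun x hx => Finset.mem_range.mp (hS.1 hx)
  rw [Finset.image_image]
  have : ∀ x ∈ S, ((fun x => A - 1 - x) ∘ fun x => A - 1 - x) x = id x := by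
    intro x hx
    have := hlt x hx
    simp only [Function.comp_apply, id]
    omega
  rw [Finset.image_congr this, Finset.image_id]

lemma reflect_sum (A B : ℕ) (g : ℕ → PowerSeries ℚ) :
    ∑ S ∈ (Finset.range A).powersetCard B, g (∑ i ∈ S, (A - 1 - i)) =
    ∑ S ∈ (Finset.range A).powersetCard B, g (∑ i ∈ S, i) := by
  apply Finset.sum_nbij' (fun S => S.image (fun x => A - 1 - x))
    (fun S => S.image (fun x => A - 1 - x))
    (reflect_mem A B) (reflect_mem A B)
    (reflect_involutive A B) (reflect_involutive A B)
  intro S hS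
  congr 1
  rw [Finset.mem_powersetCard] at hS
  have hlt : ∀ x ∈ S, x < A := fun x hx => Finset.mem_range.mp (hS.1 hx)
  rw [Finset.sum_image]
  intro x hx y hy hxy
  have hxy' : A - 1 - x = A - 1 - y := hxy
  have := hlt x hx; have := hlt y hy
  omega

lemma two_choose_two (h : ℕ) : 2 * h.choose 2 = h * (h - 1) := by
  rw [Nat.choose_two_right]
  rw [Nat.mul_div_cancel']
  rcases Nat.eq_zero_or_pos h with rfl | hh
  · simp
  · have := Nat.even_mul_succ_self (h - 1)
    rw [show h - 1 + 1 = h from by omega] at this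
    rw [mul_comm]
    exact this.two_dvd

lemma genfun (n h : ℕ) (hn : 1 ≤ n) :
    (PowerSeries.X : PowerSeries ℚ) ^ (n ^ 2 + h ^ 2 + 2 * h) * gaussBinom 2 (n - 1) h =
    ∑ S ∈ (Finset.range (n - 1)).powersetCard h,
      (PowerSeries.X : PowerSeries ℚ) ^ (n ^ 2 + ∑ k ∈ S, (2 * (n - 1 - k) + 1)) := by
  have key := gauss_eq_F 2 (by norm_num) (n - 1) h
  have hexp : n ^ 2 + h ^ 2 + 2 * h = (n ^ 2 + 3 * h) + 2 * h.choose 2 := by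
    rw [two_choose_two]
    rcases Nat.eq_zero_or_pos h with rfl | hh
    · simp
    · have h1 : h * (h - 1) = h * h - h := by rw [Nat.mul_sub]; omega
      have h2 : h ≤ h * h := Nat.le_mul_of_pos_left h hh
      have h3 : h * h = h ^ 2 := (sq h).symm
      omega
  calc (PowerSeries.X : PowerSeries ℚ) ^ (n ^ 2 + h ^ 2 + 2 * h) * gaussBinom 2 (n - 1) h
      = X ^ (n ^ 2 + 3 * h) * (gaussBinom 2 (n - 1) h * X ^ (2 * h.choose 2)) := by
        rw [hexp, pow_add]; ring
    _ = X ^ (n ^ 2 + 3 * h) * Fq 2 (n - 1) h := by rw [key]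
    _ = X ^ (n ^ 2 + 3 * h) *
          ∑ S ∈ (Finset.range (n - 1)).powersetCard h, X ^ (2 * ∑ i ∈ S, (n - 1 - 1 - i)) := by
        rw [Fq, reflect_sum (n - 1) h (fun m => X ^ (2 * m))]
    _ = ∑ S ∈ (Finset.range (n - 1)).powersetCard h,
          X ^ (n ^ 2 + ∑ k ∈ S, (2 * (n - 1 - k) + 1)) := by
        rw [Finset.mul_sum]
        apply Finset.sum_congr rfl
        intro S hS
        rw [Finset.mem_powersetCard] at hS
        rw [← pow_add]
        congr 1
        have hsum : ∑ k ∈ S, (2 * (n - 1 - k) + 1) = 2 * (∑ i ∈ S, (n - 1 - 1 - i)) + 3 * h := by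
          have : ∀ k ∈ S, 2 * (n - 1 - k) + 1 = 2 * (n - 1 - 1 - k) + 3 := by
            intro k hk
            have hk' : k < n - 1 := Finset.mem_range.mp (hS.1 hk)
            omega
          rw [Finset.sum_congr rfl this, Finset.sum_add_distrib, ← Finset.mul_sum]
          rw [Finset.sum_const, hS.2, smul_eq_mul]
          omega
        rw [hsum]
        omega

lemma coeff_sum_monomials (N : ℕ) (P : Finset (Finset ℕ)) (e : Finset ℕ → ℕ) :
    PowerSeries.coeff (R := ℚ) N (∑ S ∈ P, (PowerSeries.X : PowerSeries ℚ) ^ (e S)) =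
    ((P.filter (fun S => e S = N)).card : ℚ) := by
  rw [map_sum, Finset.card_filter]
  push_cast
  apply Finset.sum_congr rfl
  intro S _
  rw [PowerSeries.coeff_X_pow]
  by_cases h : e S = N <;> simp [h] <;> omega

def epsF (S : Finset ℕ) (k : ℕ) : ℕ := if k ∈ S then 1 else 0

def aa (S : Finset ℕ) (i : ℕ) : ℕ := 2 * i + 1 + 2 * (S.filter (· < i)).card + epsF S i

def fList (n : ℕ) (S : Finset ℕ) : List ℕ := List.ofFn (fun i : Fin n => aa S i)

lemma epsF_le_one (S : Finset ℕ) (k : ℕ) : epsF S k ≤ 1 := by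
  unfold epsF; split <;> omega

lemma filter_lt_succ (S : Finset ℕ) (i : ℕ) :
    (S.filter (· < i + 1)).card = (S.filter (· < i)).card + epsF S i := by
  have h1 : S.filter (· < i + 1) = S.filter (fun k => k < i ∨ k = i) := by
    apply Finset.filter_congr
    intro k _
    omega
  have hdisj : Disjoint (S.filter (· < i)) (S.filter (· = i)) := by
    rw [Finset.disjoint_left]
    intro k hk hk'
    simp only [Finset.mem_filter] at hk hk'
    omega
  rw [h1, Finset.filter_or, Finset.card_union_of_disjoint hdisj, Finset.filter_eq']
  unfold epsF
  by_cases hi : i ∈ S <;> simp [hi]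

lemma aa_succ (S : Finset ℕ) (i : ℕ) :
    aa S (i + 1) = aa S i + 2 + epsF S i + epsF S (i + 1) := by
  unfold aa
  rw [filter_lt_succ]
  omega

lemma aa_mod_two (S : Finset ℕ) (i : ℕ) : aa S i % 2 = (1 + epsF S i) % 2 := by
  unfold aa
  omega

lemma aa_mono (S : Finset ℕ) : Monotone (aa S) := by
  apply monotone_nat_of_le_succ
  intro i
  rw [aa_succ]
  omega

lemma filter_lt_zero (S : Finset ℕ) : S.filter (· < 0) = ∅ := by
  ext k; simp

lemma aa_zero (S : Finset ℕ) : aa S 0 = 1 + epsF S 0 := by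
  unfold aa
  rw [filter_lt_zero]
  simp

lemma aa_last (n h : ℕ) (hn : 1 ≤ n) (S : Finset ℕ) (hSsub : S ⊆ Finset.range (n - 1))
    (hcard : S.card = h) : aa S (n - 1) = 2 * n + 2 * h - 1 := by
  have h1 : S.filter (· < n - 1) = S :=
    Finset.filter_true_of_mem (fun x hx => Finset.mem_range.mp (hSsub hx))
  have h2 : epsF S (n - 1) = 0 := by
    unfold epsF
    rw [if_neg]
    intro hc
    have := Finset.mem_range.mp (hSsub hc)
    omega
  unfold aa
  rw [h1, h2, hcard]
  omega

lemma fList_length (n : ℕ) (S : Finset ℕ) : (fList n S).length = n := by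
  rw [fList, List.length_ofFn]

lemma fList_getElem (n : ℕ) (S : Finset ℕ) (i : ℕ) (hi : i < (fList n S).length) :
    (fList n S)[i] = aa S i := by
  simp only [fList, List.getElem_ofFn]

lemma fList_sorted (n : ℕ) (S : Finset ℕ) : (fList n S).Pairwise (· ≤ ·) := by
  rw [fList, List.pairwise_ofFn]
  intro i j hij
  exact aa_mono S (le_of_lt hij)

lemma fList_pos (n : ℕ) (S : Finset ℕ) : ∀ x ∈ fList n S, 0 < x := by
  intro x hx
  unfold fList at hx
  rw [List.mem_ofFn] at hx
  obtain ⟨i, rfl⟩ := hx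
  unfold aa
  omega

lemma fList_head (n : ℕ) (hn : 1 ≤ n) (S : Finset ℕ) :
    ∀ x, (fList n S).head? = some x → x = 1 ∨ x = 2 := by
  obtain ⟨m, rfl⟩ : ∃ m, n = m + 1 := ⟨n - 1, by omega⟩
  intro x hx
  rw [fList, List.ofFn_succ, List.head?_cons] at hx
  have hx' : x = aa S 0 := by
    injection hx with h
    exact h.symm
  rw [hx', aa_zero]
  have := epsF_le_one S 0
  omega

lemma fList_chain (n : ℕ) (S : Finset ℕ) :
    (fList n S).Chain' (fun a b =>
      (Odd b → a + 2 ≤ b ∧ b ≤ a + 3) ∧ (Even b → a + 3 ≤ b ∧ b ≤ a + 4)) := by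
  refine List.isChain_iff_getElem.mpr ?_
  intro i hi
  rw [fList, List.length_ofFn] at hi
  simp only [List.get_eq_getElem, fList_getElem]
  have hsucc := aa_succ S i
  have hm1 := aa_mod_two S i
  have hm2 := aa_mod_two S (i + 1)
  have he1 := epsF_le_one S i
  have he2 := epsF_le_one S (i + 1)
  constructor
  · intro hodd
    rw [Nat.odd_iff] at hodd
    omega
  · intro heven
    rw [Nat.even_iff] at heven
    omega

lemma fList_getLast (n h : ℕ) (hn : 1 ≤ n) (S : Finset ℕ) (hSsub : S ⊆ Finset.range (n - 1))
    (hcard : S.card = h) : (fList n S).getLast? = some (2 * n + 2 * h - 1) := by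
  rw [List.getLast?_eq_getElem?, fList_length]
  rw [List.getElem?_eq_getElem (by rw [fList_length]; omega)]
  rw [fList_getElem, aa_last n h hn S hSsub hcard]

lemma fList_sum (n : ℕ) (hn : 1 ≤ n) (S : Finset ℕ) (hSsub : S ⊆ Finset.range (n - 1)) :
    (fList n S).sum = n ^ 2 + ∑ k ∈ S, (2 * (n - 1 - k) + 1) := by
  rw [fList, List.sum_ofFn]
  rw [Fin.sum_univ_eq_sum_range (fun i => aa S i) n]
  unfold aa
  have p1 : ∀ m : ℕ, ∑ i ∈ Finset.range m, (2 * i + 1) = m ^ 2 := by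
    intro m
    induction m with
    | zero => simp
    | succ m ih =>
      rw [Finset.sum_range_succ, ih]
      have : (m + 1) ^ 2 = m ^ 2 + 2 * m + 1 := by ring
      omega
  have p3 : ∑ i ∈ Finset.range n, epsF S i = S.card := by
    unfold epsF
    rw [← Finset.card_filter]
    congr 1
    ext k
    simp only [Finset.mem_filter, Finset.mem_range]
    constructor
    · exact fun hk => hk.2
    · intro hk
      exact ⟨by have := Finset.mem_range.mp (hSsub hk); omega, hk⟩
  have p2 : ∑ i ∈ Finset.range n, (S.filter (· < i)).card = ∑ k ∈ S, (n - 1 - k) := by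
    have q1 : ∀ i ∈ Finset.range n, (S.filter (· < i)).card
        = ∑ k ∈ S, if k < i then 1 else 0 := fun i _ => Finset.card_filter _ _
    rw [Finset.sum_congr rfl q1, Finset.sum_comm]
    apply Finset.sum_congr rfl
    intro k hk
    have hkn : k < n - 1 := Finset.mem_range.mp (hSsub hk)
    rw [← Finset.card_filter]
    have : (Finset.range n).filter (fun i => k < i) = Finset.Ico (k + 1) n := by
      ext i
      simp only [Finset.mem_filter, Finset.mem_range, Finset.mem_Ico]
      omega
    rw [this, Nat.card_Ico]
    omega
  have ptarget : ∑ k ∈ S, (2 * (n - 1 - k) + 1)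
      = 2 * (∑ k ∈ S, (n - 1 - k)) + S.card := by
    rw [Finset.sum_add_distrib, ← Finset.mul_sum, Finset.sum_const, smul_eq_mul, mul_one]
  rw [Finset.sum_add_distrib, Finset.sum_add_distrib, p1, p3, ← Finset.mul_sum, p2, ptarget]
  omega

lemma fList_injOn (n : ℕ) (S T : Finset ℕ) (hSsub : S ⊆ Finset.range (n - 1))
    (hTsub : T ⊆ Finset.range (n - 1)) (heq : fList n S = fList n T) : S = T := by
  have haa : ∀ i : ℕ, i < n → aa S i = aa T i := by
    intro i hi
    have h1 : (fList n S)[i]'(by rw [fList_length]; omega)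
        = (fList n T)[i]'(by rw [fList_length]; omega) := by
      congr 1
    rwa [fList_getElem, fList_getElem] at h1
  ext k
  by_cases hk : k < n - 1
  · have hkk := haa k (by omega)
    have hm1 := aa_mod_two S k
    have hm2 := aa_mod_two T k
    have he1 := epsF_le_one S k
    have he2 := epsF_le_one T k
    have heps : epsF S k = epsF T k := by omega
    unfold epsF at heps
    by_cases hS : k ∈ S <;> by_cases hT : k ∈ T <;> simp [hS, hT] at heps ⊢
  · constructor
    · intro hc
      exact absurd (Finset.mem_range.mp (hSsub hc)) hk
    · intro hc
      exact absurd (Finset.mem_range.mp (hTsub hc)) hk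

lemma fList_surj (n h : ℕ) (hn : 1 ≤ n) (l : List ℕ)
    (hhead : ∀ x, l.head? = some x → x = 1 ∨ x = 2)
    (hchain : l.Chain' (fun a b =>
      (Odd b → a + 2 ≤ b ∧ b ≤ a + 3) ∧ (Even b → a + 3 ≤ b ∧ b ≤ a + 4)))
    (hlen : l.length = n) (hlast : l.getLast? = some (2 * n + 2 * h - 1)) :
    ∃ S : Finset ℕ, S ⊆ Finset.range (n - 1) ∧ S.card = h ∧ fList n S = l := by
  obtain ⟨g, hgdef⟩ : ∃ g : ℕ → ℕ, g = fun k => l.getD k 0 := ⟨_, rfl⟩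
  obtain ⟨S, hSdef⟩ : ∃ S : Finset ℕ,
      S = (Finset.range (n - 1)).filter (fun k => g k % 2 = 0) := ⟨_, rfl⟩
  have hSsub : S ⊆ Finset.range (n - 1) := hSdef ▸ Finset.filter_subset _ _
  have hgd : ∀ i (hi : i < l.length), g i = l[i] := by
    intro i hi
    rw [hgdef]
    exact List.getD_eq_getElem l 0 hi
  have glast : g (n - 1) = 2 * n + 2 * h - 1 := by
    rw [List.getLast?_eq_getElem?, hlen, List.getElem?_eq_getElem (by omega)] at hlast
    rw [hgd (n - 1) (by omega)]
    injection hlast with h'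
  have hepsS : ∀ k, k < n → epsF S k = (if g k % 2 = 0 then 1 else 0) := by
    intro k hk
    by_cases hk' : k < n - 1
    · by_cases hp : g k % 2 = 0
      · have hmem : k ∈ S := by
          rw [hSdef]
          exact Finset.mem_filter.mpr ⟨Finset.mem_range.mpr hk', hp⟩
        unfold epsF
        rw [if_pos hmem, if_pos hp]
      · have hmem : k ∉ S := by
          rw [hSdef]
          intro hc
          exact hp (Finset.mem_filter.mp hc).2
        unfold epsF
        rw [if_neg hmem, if_neg hp]
    · have hk2 : k = n - 1 := by omega
      subst hk2
      have hodd : g (n - 1) % 2 = 1 := by rw [glast]; omega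
      have hmem : n - 1 ∉ S := fun hc => by
        have := Finset.mem_range.mp (hSsub hc)
        omega
      unfold epsF
      rw [if_neg hmem, if_neg (by omega)]
  have key : ∀ i, i < n → g i = aa S i := by
    intro i
    induction i with
    | zero =>
      intro hi
      have h0 : l.head? = some (g 0) := by
        rw [List.head?_eq_getElem?, List.getElem?_eq_getElem (by omega), hgd 0 (by omega)]
      have h12 := hhead (g 0) h0
      have he := hepsS 0 (by omega)
      rw [aa_zero, he]
      by_cases hp : g 0 % 2 = 0 <;> simp [hp] <;> omega
    | succ i ih =>
      intro hi
      have hgi := ih (by omega)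
      have hch := List.isChain_iff_getElem.mp hchain i (by rw [hlen]; omega)
      rw [← hgd i (by omega), ← hgd (i + 1) (by omega)] at hch
      obtain ⟨hO, hE⟩ := hch
      have he1 := hepsS i (by omega)
      have he2 := hepsS (i + 1) (by omega)
      rw [aa_succ, ← hgi]
      by_cases hp1 : g i % 2 = 0 <;> by_cases hp2 : g (i + 1) % 2 = 0 <;>
        simp [hp1, hp2] at he1 he2 <;>
        first
          | (have := hE (Nat.even_iff.mpr hp2); omega)
          | (have := hO (Nat.odd_iff.mpr (by omega)); omega)
  refine ⟨S, hSsub, ?_, ?_⟩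
  · have hlastaa := key (n - 1) (by omega)
    rw [glast] at hlastaa
    have h1 : S.filter (· < n - 1) = S :=
      Finset.filter_true_of_mem (fun x hx => Finset.mem_range.mp (hSsub hx))
    have h2 : epsF S (n - 1) = 0 := by
      unfold epsF
      rw [if_neg]
      intro hc
      have := Finset.mem_range.mp (hSsub hc)
      omega
    unfold aa at hlastaa
    rw [h1, h2] at hlastaa
    omega
  · apply List.ext_getElem
    · rw [fList_length, hlen]
    · intro i h1 h2
      rw [fList_getElem]
      rw [fList_length] at h1
      rw [← key i h1, hgd i (by omega)]

/-- the generating function (stated coefficientwise) for the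
basis partitions of the Göllnitz–Gordon SIP class with `n` parts and
largest part `2n + 2h − 1` is `q^{n²+h²+2h} [n−1 choose h]_{q²}`. -/
theorem stmt4 (n h : ℕ) (hn : 1 ≤ n) (N : ℕ) :
    ({l : List ℕ | l.Pairwise (· ≤ ·) ∧ (∀ x ∈ l, 0 < x) ∧
      (∀ x, l.head? = some x → x = 1 ∨ x = 2) ∧
      l.Chain' (fun a b =>
        (Odd b → a + 2 ≤ b ∧ b ≤ a + 3) ∧ (Even b → a + 3 ≤ b ∧ b ≤ a + 4)) ∧
      l.length = n ∧ l.getLast? = some (2 * n + 2 * h - 1) ∧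
      l.sum = N}).ncard =
    PowerSeries.coeff (R := ℚ) N
      ((PowerSeries.X : PowerSeries ℚ) ^ (n ^ 2 + h ^ 2 + 2 * h) *
        gaussBinom 2 (n - 1) h) := by
  have hgf := genfun n h hn
  rw [hgf, coeff_sum_monomials N _ (fun S => n ^ 2 + ∑ k ∈ S, (2 * (n - 1 - k) + 1))]
  have hset : {l : List ℕ | l.Pairwise (· ≤ ·) ∧ (∀ x ∈ l, 0 < x) ∧
      (∀ x, l.head? = some x → x = 1 ∨ x = 2) ∧
      l.Chain' (fun a b =>
        (Odd b → a + 2 ≤ b ∧ b ≤ a + 3) ∧ (Even b → a + 3 ≤ b ∧ b ≤ a + 4)) ∧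
      l.length = n ∧ l.getLast? = some (2 * n + 2 * h - 1) ∧
      l.sum = N} =
      ↑((((Finset.range (n - 1)).powersetCard h).filter
        (fun S => n ^ 2 + ∑ k ∈ S, (2 * (n - 1 - k) + 1) = N)).image (fList n)) := by
    ext l
    simp only [Set.mem_setOf_eq, Finset.coe_image, Set.mem_image, Finset.mem_coe,
      Finset.mem_filter, Finset.mem_powersetCard]
    constructor
    · rintro ⟨hsort, hpos, hhead, hchain, hlen, hlast, hsum⟩
      obtain ⟨S, hSsub, hScard, hfl⟩ := fList_surj n h hn l hhead hchain hlen hlast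
      exact ⟨S, ⟨⟨hSsub, hScard⟩, by rw [← fList_sum n hn S hSsub, hfl, hsum]⟩, hfl⟩
    · rintro ⟨S, ⟨⟨hSsub, hScard⟩, hES⟩, rfl⟩
      exact ⟨fList_sorted n S, fList_pos n S, fList_head n hn S, fList_chain n S,
        fList_length n S, fList_getLast n h hn S hSsub hScard,
        by rw [fList_sum n hn S hSsub]; exact hES⟩
  rw [hset, Set.ncard_coe_finset]
  rw [Finset.card_image_of_injOn]
  intro S hS T hT heq
  simp only [Finset.coe_filter, Set.mem_setOf_eq, Finset.mem_powersetCard] at hS hT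
  exact fList_injOn n S T hS.1.1 hT.1.1 heq
end

section
/- For all integers r ≥ 0 and s ≥ 0, and every complex number q with |q| < 1: ∑_{n≥0} [r choose n]_{q³} · [n+s choose r]_{q³} · q^{3n² + 3n(s−r)} / (q³;q³)_{n+s} = 1 / ((q³;q³)_r · (q³;q³)_s). -/
open Finset

/-- `(q^j; q^j)_n = ∏_{i=0}^{n-1} (1 - q^{j(i+1)})` evaluated at a complex `q`. -/
noncomputable def qPochC (q : ℂ) (j n : ℕ) : ℂ :=
  ∏ i ∈ Finset.range n, (1 - q ^ (j * (i + 1)))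

/-- Gaussian binomial `[A choose B]_{q^j}` evaluated at a complex `q`. -/
noncomputable def gaussBinomC (q : ℂ) (j A B : ℕ) : ℂ :=
  if B ≤ A then qPochC q j A / (qPochC q j B * qPochC q j (A - B)) else 0


noncomputable def Pc (Q : ℂ) (n : ℕ) : ℂ := ∏ i ∈ Finset.range n, (1 - Q ^ (i + 1))

noncomputable def Gc (Q : ℂ) (A B : ℕ) : ℂ :=
  if B ≤ A then Pc Q A / (Pc Q B * Pc Q (A - B)) else 0

lemma Pc_succ (Q : ℂ) (n : ℕ) : Pc Q (n+1) = Pc Q n * (1 - Q ^ (n+1)) :=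
  Finset.prod_range_succ _ _

lemma Pc_zero (Q : ℂ) : Pc Q 0 = 1 := by simp [Pc]

lemma Gc_of_le (Q : ℂ) {A B : ℕ} (h : B ≤ A) :
    Gc Q A B = Pc Q A / (Pc Q B * Pc Q (A - B)) := if_pos h

lemma Gc_zero (Q : ℂ) (hP : ∀ n, Pc Q n ≠ 0) (A : ℕ) : Gc Q A 0 = 1 := by
  rw [Gc_of_le Q (Nat.zero_le A), Nat.sub_zero, Pc_zero, one_mul, div_self (hP A)]

lemma Gc_self (Q : ℂ) (hP : ∀ n, Pc Q n ≠ 0) (A : ℕ) : Gc Q A A = 1 := by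
  rw [Gc_of_le Q le_rfl, Nat.sub_self, Pc_zero, mul_one, div_self (hP A)]

lemma Gc_big (Q : ℂ) {A B : ℕ} (h : A < B) : Gc Q A B = 0 := by
  unfold Gc; rw [if_neg (by omega)]

lemma one_sub_ne (Q : ℂ) (hP : ∀ n, Pc Q n ≠ 0) (m : ℕ) : (1 - Q ^ (m + 1)) ≠ 0 := by
  have := hP (m + 1); rw [Pc_succ] at this; exact right_ne_zero_of_mul this

lemma pascal (Q : ℂ) (hP : ∀ n, Pc Q n ≠ 0) (A B : ℕ) :
    Gc Q (A+1) (B+1) = Gc Q A (B+1) + Q ^ (A - B) * Gc Q A B := by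
  by_cases h : B ≤ A
  · rw [Gc_of_le Q (by omega : B + 1 ≤ A + 1), Gc_of_le Q h]
    by_cases h2 : B + 1 ≤ A
    · rw [Gc_of_le Q h2]
      have e1 : A + 1 - (B+1) = A - B := by omega
      have e2 : A - B = (A - (B+1)) + 1 := by omega
      rw [e1, e2, Pc_succ, Pc_succ, Pc_succ]
      have hq1 : Q ^ (A + 1) = Q ^ (A - (B+1) + 1) * Q ^ (B+1) := by
        rw [← pow_add]; congr 1; omega
      have h1 := hP A; have h2' := hP B; have h3 := hP (A - (B+1))
      have h4 := one_sub_ne Q hP B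
      have h5 := one_sub_ne Q hP (A - (B+1))
      rw [hq1]
      field_simp
      ring
    · have hBA : B = A := by omega
      subst hBA
      rw [Gc_big Q (by omega)]
      simp [Nat.sub_self, Pc_zero, div_self (hP (B+1)), div_self (hP B)]
  · rw [Gc_big Q (by omega : A + 1 < B + 1), Gc_big Q (by omega : A < B + 1),
      Gc_big Q (by omega : A < B)]
    ring

lemma stepG (Q : ℂ) (hP : ∀ n, Pc Q n ≠ 0) (s j : ℕ) :
    Gc Q s (j+1) * Pc Q (j+1) = Gc Q s j * Pc Q j * (1 - Q ^ (s - j)) := by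
  by_cases h : j + 1 ≤ s
  · rw [Gc_of_le Q h, Gc_of_le Q (by omega : j ≤ s)]
    have e : s - j = (s - (j+1)) + 1 := by omega
    rw [e, Pc_succ]
    have h4 := one_sub_ne Q hP (s - (j+1))
    rw [div_mul_eq_mul_div, div_mul_eq_mul_div, div_mul_eq_mul_div,
      div_eq_div_iff
        (mul_ne_zero (mul_ne_zero (hP j) (one_sub_ne Q hP j)) (hP (s-(j+1))))
        (mul_ne_zero (hP j) (hP (s-(j+1)+1)))]
    rw [Pc_succ Q (s-(j+1))]
    ring
  · by_cases h2 : j ≤ s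
    · have : j = s := by omega
      subst this
      rw [Gc_big Q (by omega), Nat.sub_self]
      simp
    · rw [Gc_big Q (by omega : s < j + 1), Gc_big Q (by omega : s < j)]; ring

lemma Tlemma (Q : ℂ) (hP : ∀ n, Pc Q n ≠ 0) (r s : ℕ) :
    ∑ j ∈ range (r+1), Gc Q r j * Gc Q s j * Pc Q j * Q ^ ((r-j)*(s-j)) = 1 := by
  induction r with
  | zero =>
    simp [Gc_zero Q hP, Pc_zero]
  | succ r ih =>
    rw [Finset.sum_range_succ'
      (fun j => Gc Q (r+1) j * Gc Q s j * Pc Q j * Q ^ ((r+1-j)*(s-j))) (r+1)]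
    have key : ∀ j ∈ range (r+1),
        Gc Q (r+1) (j+1) * Gc Q s (j+1) * Pc Q (j+1) * Q ^ ((r+1-(j+1))*(s-(j+1)))
        = Gc Q r (j+1) * Gc Q s (j+1) * Pc Q (j+1) * Q ^ ((r+1-(j+1))*(s-(j+1)))
          + (Gc Q r j * Gc Q s j * Pc Q j * Q ^ ((r-j)*(s-j))
             - Gc Q r j * Gc Q s j * Pc Q j * Q ^ ((r+1-j)*(s-j))) := by
      intro j hj
      simp only [mem_range] at hj
      rw [pascal Q hP r j]
      have es : r + 1 - (j + 1) = r - j := by omega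
      rw [es]
      by_cases hjs : j < s
      · have e1 : s - j = (s - (j+1)) + 1 := by omega
        have e2 : r + 1 - j = (r - j) + 1 := by omega
        have hst : Gc Q s (j+1) * Pc Q (j+1) = Gc Q s j * Pc Q j * (1 - Q ^ (s - j)) :=
          stepG Q hP s j
        rw [e1] at hst
        rw [e1, e2]
        calc (Gc Q r (j+1) + Q ^ (r - j) * Gc Q r j) * Gc Q s (j+1) * Pc Q (j+1) *
                Q ^ ((r-j)*(s-(j+1)))
            = Gc Q r (j+1) * Gc Q s (j+1) * Pc Q (j+1) * Q ^ ((r-j)*(s-(j+1)))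
              + Q ^ (r - j) * Gc Q r j * (Gc Q s (j+1) * Pc Q (j+1)) *
                Q ^ ((r-j)*(s-(j+1))) := by ring
          _ = Gc Q r (j+1) * Gc Q s (j+1) * Pc Q (j+1) * Q ^ ((r-j)*(s-(j+1)))
              + (Gc Q r j * Gc Q s j * Pc Q j * Q ^ ((r-j)*((s-(j+1))+1))
                 - Gc Q r j * Gc Q s j * Pc Q j * Q ^ (((r-j)+1)*((s-(j+1))+1))) := by
                rw [hst]; ring
      · have h0 : s - j = 0 := by omega
        have h1 : s - (j+1) = 0 := by omega
        have hst : Gc Q s (j+1) * Pc Q (j+1) = Gc Q s j * Pc Q j * (1 - Q ^ (s - j)) :=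
          stepG Q hP s j
        rw [h0, pow_zero] at hst
        rw [h0, h1]
        calc (Gc Q r (j+1) + Q ^ (r - j) * Gc Q r j) * Gc Q s (j+1) * Pc Q (j+1) *
                Q ^ ((r-j)*0)
            = Gc Q r (j+1) * Gc Q s (j+1) * Pc Q (j+1) * Q ^ ((r-j)*0)
              + Q ^ (r - j) * Gc Q r j * (Gc Q s (j+1) * Pc Q (j+1)) * Q ^ ((r-j)*0) := by
                ring
          _ = Gc Q r (j+1) * Gc Q s (j+1) * Pc Q (j+1) * Q ^ ((r-j)*0)
              + (Gc Q r j * Gc Q s j * Pc Q j * Q ^ ((r-j)*0)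
                 - Gc Q r j * Gc Q s j * Pc Q j * Q ^ ((r+1-j)*0)) := by
                rw [hst]; ring_nf
    rw [Finset.sum_congr rfl key]
    rw [Finset.sum_add_distrib, Finset.sum_sub_distrib, ih]
    have hshift := Finset.sum_range_succ'
      (fun k => Gc Q r k * Gc Q s k * Pc Q k * Q ^ ((r+1-k)*(s-k))) (r+1)
    have hsucc := Finset.sum_range_succ
      (fun k => Gc Q r k * Gc Q s k * Pc Q k * Q ^ ((r+1-k)*(s-k))) (r+1)
    rw [Gc_big Q (by omega : r < r + 1)] at hsucc
    rw [Gc_zero Q hP r, Gc_zero Q hP s, Pc_zero] at hshift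
    rw [Gc_zero Q hP (r+1), Gc_zero Q hP s, Pc_zero]
    linear_combination hsucc - hshift

/-- Lemma 10 of the paper. -/
theorem stmt8 (r s : ℕ) (q : ℂ) (hq : ‖q‖ < 1) :
    ∑' n : ℕ, gaussBinomC q 3 r n * gaussBinomC q 3 (n + s) r *
        q ^ (3 * (n : ℤ) ^ 2 + 3 * (n : ℤ) * ((s : ℤ) - (r : ℤ))) / qPochC q 3 (n + s) =
    1 / (qPochC q 3 r * qPochC q 3 s) := by
  have hP : ∀ n, Pc (q^3) n ≠ 0 := by
    intro n
    unfold Pc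
    rw [Finset.prod_ne_zero_iff]
    intro i _
    have hlt : ‖(q^3) ^ (i+1)‖ < 1 := by
      rw [← pow_mul, norm_pow]
      exact pow_lt_one₀ (norm_nonneg q) hq (by omega)
    intro h
    rw [sub_eq_zero] at h
    rw [← h] at hlt
    simp at hlt
  have hPq : ∀ n, qPochC q 3 n = Pc (q^3) n := by
    intro n
    exact Finset.prod_congr rfl fun i _ => by rw [pow_mul]
  have hGq : ∀ A B, gaussBinomC q 3 A B = Gc (q^3) A B := by
    intro A B
    unfold gaussBinomC Gc
    rw [hPq, hPq, hPq]
  rw [tsum_eq_sum (s := Finset.range (r+1))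
    (by
      intro b hb
      simp only [mem_range, not_lt] at hb
      rw [hGq, Gc_big _ (show r < b by omega)]
      simp)]
  simp only [hGq, hPq]
  rw [← Finset.sum_range_reflect]
  simp only [Nat.add_sub_cancel]
  rw [eq_div_iff (mul_ne_zero (hP r) (hP s)), Finset.sum_mul]
  rw [Finset.sum_congr rfl (fun j hj => ?_)]
  · exact Tlemma (q^3) hP r s
  · -- per-term
    simp only [mem_range] at hj
    have hjr : j ≤ r := by omega
    by_cases hjs : j ≤ s
    · have e1 : r - (r - j) = j := by omega
      have e2 : r - j + s - r = s - j := by omega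
      rw [Gc_of_le _ (show r - j ≤ r by omega), Gc_of_le _ (show r ≤ r - j + s by omega),
        Gc_of_le _ hjr, Gc_of_le _ hjs, e1, e2]
      have hr : ((r - j : ℕ) : ℤ) = (r : ℤ) - (j : ℤ) := by omega
      have hs : ((s - j : ℕ) : ℤ) = (s : ℤ) - (j : ℤ) := by omega
      have ecast : (3 * ((r - j : ℕ) : ℤ)^2 + 3 * ((r - j : ℕ) : ℤ) * ((s:ℤ) - (r:ℤ)))
          = ((3 * ((r - j) * (s - j)) : ℕ) : ℤ) := by
        push_cast
        rw [hr, hs]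
        ring
      rw [ecast, zpow_natCast, pow_mul]
      have d1 := hP (r - j); have d2 := hP j; have d3 := hP (s - j)
      have d4 := hP r; have d5 := hP s; have d6 := hP (r - j + s)
      field_simp
    · rw [Gc_big _ (show r - j + s < r by omega), Gc_big _ (show s < j by omega)]
      ring
end

section
/- For every complex number q with |q| < 1: 1 + (q² + q³)/(1 − q²) + ∑_{n≥2} (−q³;q⁴)_{n−1} · q^{2n} · (1 + q^{2n−1}) / (q²;q²)_n = ∏_{n≥1, n ≢ 1, 5, 6 (mod 8)} 1/(1 − q^n). -/
open Finset Filter Topology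

namespace S10

lemma abs_prod_one_add_le (x : ℕ → ℂ) (a : ℕ → ℝ) (hb : ∀ n, ‖x n‖ ≤ a n)
    (m : ℕ) : ‖∏ k ∈ range m, (1 + x k)‖ ≤ Real.exp (∑ k ∈ range m, a k) := by
  induction m with
  | zero => simp
  | succ m ih =>
    rw [prod_range_succ, sum_range_succ, norm_mul, Real.exp_add]
    have h0 : (0:ℝ) ≤ a m := le_trans (norm_nonneg _) (hb m)
    have h1 : ‖1 + x m‖ ≤ Real.exp (a m) := by
      calc ‖1 + x m‖ ≤ 1 + ‖x m‖ := by
            simpa using norm_add_le 1 (x m)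
        _ ≤ 1 + a m := by linarith [hb m]
        _ ≤ Real.exp (a m) := by linarith [Real.add_one_le_exp (a m)]
    exact mul_le_mul ih h1 (norm_nonneg _) (Real.exp_nonneg _)

lemma exp_le_one_sub {t d : ℝ} (ht : 0 ≤ t) (htd : t ≤ d) (hd : d < 1) :
    Real.exp (-(t / (1 - d))) ≤ 1 - t := by
  have h1t : 0 < 1 - t := by linarith
  have h1d : 0 < 1 - d := by linarith
  have key : 1 ≤ (1 - t) * Real.exp (t / (1 - t)) := by
    have h := Real.add_one_le_exp (t / (1 - t))
    have h2 : (1 - t) * (t / (1 - t) + 1) ≤ (1 - t) * Real.exp (t / (1 - t)) :=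
      mul_le_mul_of_nonneg_left h h1t.le
    have h3 : (1 - t) * (t / (1 - t) + 1) = 1 := by field_simp; ring
    linarith
  have hmono : Real.exp (t / (1 - t)) ≤ Real.exp (t / (1 - d)) := by
    exact Real.exp_le_exp.2 (by gcongr)
  have e2 : 0 < Real.exp (t / (1 - d)) := Real.exp_pos _
  rw [Real.exp_neg]
  have : 1 ≤ (1 - t) * Real.exp (t / (1 - d)) := le_trans key (by nlinarith)
  calc (Real.exp (t / (1 - d)))⁻¹ ≤ ((1 - t) * Real.exp (t / (1 - d))) * (Real.exp (t / (1 - d)))⁻¹ := by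
        nlinarith [inv_pos.2 e2]
    _ = 1 - t := by field_simp

lemma exp_le_abs_prod_one_add (x : ℕ → ℂ) (a : ℕ → ℝ) {d S : ℝ}
    (hb : ∀ n, ‖x n‖ ≤ a n) (h0 : ∀ n, 0 ≤ a n) (had : ∀ n, a n ≤ d)
    (hd : d < 1) (hS : ∀ m, ∑ k ∈ range m, a k ≤ S) (m : ℕ) :
    Real.exp (-(S / (1 - d))) ≤ ‖∏ k ∈ range m, (1 + x k)‖ := by
  have h1d : 0 < 1 - d := by
    have := h0 0; linarith
  have main : ∀ m, Real.exp (-((∑ k ∈ range m, a k) / (1 - d))) ≤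
      ‖∏ k ∈ range m, (1 + x k)‖ := by
    intro m
    induction m with
    | zero => simp
    | succ m ih =>
      rw [prod_range_succ, sum_range_succ, norm_mul]
      have hf : Real.exp (-(a m / (1 - d))) ≤ ‖1 + x m‖ := by
        calc Real.exp (-(a m / (1 - d))) ≤ 1 - a m := exp_le_one_sub (h0 m) (had m) hd
          _ ≤ 1 - ‖x m‖ := by linarith [hb m]
          _ ≤ ‖1 + x m‖ := by
              have := norm_add_le (1 + x m) (-x m)
              simp only [add_neg_cancel_right, norm_neg, norm_one] at this
              simpa using this
      calc Real.exp (-((∑ k ∈ range m, a k + a m) / (1 - d)))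
          = Real.exp (-((∑ k ∈ range m, a k) / (1 - d))) * Real.exp (-(a m / (1 - d))) := by
            rw [← Real.exp_add]; ring_nf
        _ ≤ _ := mul_le_mul ih hf (Real.exp_nonneg _) (norm_nonneg _)
  calc Real.exp (-(S / (1 - d))) ≤ Real.exp (-((∑ k ∈ range m, a k) / (1 - d))) := by
        apply Real.exp_le_exp.2
        have := hS m
        have : (∑ k ∈ range m, a k) / (1 - d) ≤ S / (1 - d) := by gcongr
        linarith
    _ ≤ _ := main m


lemma summable_log (x : ℕ → ℂ) (hs : Summable fun n => ‖x n‖) :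
    Summable fun n => Complex.log (1 + x n) := by
  have h0 : Tendsto (fun n => ‖x n‖) atTop (𝓝 0) := hs.tendsto_atTop_zero
  apply Summable.of_norm_bounded_eventually_nat (g := fun n => 3/2 * ‖x n‖)
    (hs.mul_left _)
  have hev : ∀ᶠ n in atTop, ‖x n‖ ≤ 1/2 := by
    have : ∀ᶠ y in 𝓝 (0:ℝ), y ≤ 1/2 := eventually_le_nhds (by norm_num)
    exact h0.eventually this
  filter_upwards [hev] with n hn
  have := Complex.norm_log_one_add_half_le_self (z := x n) (by simpa using hn)
  simpa using this

lemma pack (x : ℕ → ℂ) (hne : ∀ n, 1 + x n ≠ 0) {K r : ℝ} (hr0 : 0 ≤ r) (hr : r < 1)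
    (hb : ∀ n, ‖x n‖ ≤ K * r ^ n) :
    Multipliable (fun n => 1 + x n) ∧ (∏' n, (1 + x n)) ≠ 0 := by
  have hs : Summable fun n => ‖x n‖ :=
    Summable.of_nonneg_of_le (fun n => norm_nonneg _) hb
      ((summable_geometric_of_lt_one hr0 hr).mul_left K)
  have hlog := summable_log x hs
  have hm : Multipliable fun n => 1 + x n :=
    Complex.multipliable_of_summable_log hlog
  refine ⟨hm, ?_⟩
  have h := Complex.cexp_tsum_eq_tprod (f := fun n => 1 + x n) hne hlog
  rw [← h]
  exact Complex.exp_ne_zero _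


def Aq (q : ℂ) (k : ℕ) : ℂ := 1 - q ^ (2 * (k + 1))
def Bq (q : ℂ) (j : ℕ) : ℂ := 1 + q ^ (4 * j + 3)
def Cq (q : ℂ) (j : ℕ) : ℂ := 1 - q ^ (4 * j + 3)
def Dq (q : ℂ) (j : ℕ) : ℂ := 1 - q ^ (8 * j + 6)
noncomputable def fq (q : ℂ) (m : ℕ) : ℂ :=
  if (m + 1) % 8 = 1 ∨ (m + 1) % 8 = 5 ∨ (m + 1) % 8 = 6 then 1 else 1 / (1 - q ^ (m + 1))

variable {q : ℂ}

lemma abs_pow_lt (hq : ‖q‖ < 1) {k : ℕ} (hk : 1 ≤ k) :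
    ‖q ^ k‖ < 1 := by
  rw [norm_pow]
  exact pow_lt_one₀ (norm_nonneg q) hq (by omega)

lemma abs_pow_le (hq : ‖q‖ < 1) {n k : ℕ} (hk : n ≤ k) :
    ‖q ^ k‖ ≤ ‖q‖ ^ n := by
  rw [norm_pow]
  exact pow_le_pow_of_le_one (norm_nonneg q) hq.le hk

lemma one_sub_ne (hq : ‖q‖ < 1) {k : ℕ} (hk : 1 ≤ k) : (1 : ℂ) - q ^ k ≠ 0 := by
  intro h
  have h1 : q ^ k = 1 := by linear_combination -h
  have := abs_pow_lt hq hk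
  rw [h1] at this
  simp at this

lemma one_add_ne (hq : ‖q‖ < 1) {k : ℕ} (hk : 1 ≤ k) : (1 : ℂ) + q ^ k ≠ 0 := by
  intro h
  have h1 : q ^ k = -1 := by linear_combination h
  have := abs_pow_lt hq hk
  rw [h1] at this
  simp at this

lemma abs_one_sub_ge (hq : ‖q‖ < 1) {k : ℕ} (hk : 1 ≤ k) :
    1 - ‖q‖ ≤ ‖1 - q ^ k‖ := by
  have h1 : ‖q ^ k‖ ≤ ‖q‖ := by simpa using abs_pow_le hq hk
  calc 1 - ‖q‖ ≤ 1 - ‖q ^ k‖ := by linarith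
    _ ≤ ‖1 - q ^ k‖ := by
        have := norm_add_le (1 - q ^ k) (q ^ k)
        simp only [sub_add_cancel, norm_one] at this
        linarith

lemma hA (hq : ‖q‖ < 1) : Multipliable (Aq q) ∧ (∏' k, Aq q k) ≠ 0 := by
  have h := pack (fun k => -(q ^ (2 * (k + 1)))) (K := 1) (r := ‖q‖)
    (fun k => by simpa [sub_eq_add_neg] using one_sub_ne hq (k := 2 * (k + 1)) (by omega))
    (norm_nonneg q) hq
    (fun k => by simpa using abs_pow_le hq (n := k) (by omega))
  have e : (fun k => 1 + -(q ^ (2 * (k + 1)))) = Aq q := by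
    funext k; simp [Aq, sub_eq_add_neg]
  rwa [e] at h

lemma hB (hq : ‖q‖ < 1) : Multipliable (Bq q) ∧ (∏' j, Bq q j) ≠ 0 := by
  have h := pack (fun j => q ^ (4 * j + 3)) (K := 1) (r := ‖q‖)
    (fun j => one_add_ne hq (by omega))
    (norm_nonneg q) hq
    (fun j => by simpa using abs_pow_le hq (n := j) (by omega))
  have e : (fun j => 1 + q ^ (4 * j + 3)) = Bq q := by funext j; simp [Bq]
  rwa [e] at h

lemma hC (hq : ‖q‖ < 1) : Multipliable (Cq q) ∧ (∏' j, Cq q j) ≠ 0 := by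
  have h := pack (fun j => -(q ^ (4 * j + 3))) (K := 1) (r := ‖q‖)
    (fun j => by simpa [sub_eq_add_neg] using one_sub_ne hq (k := 4 * j + 3) (by omega))
    (norm_nonneg q) hq
    (fun j => by simpa using abs_pow_le hq (n := j) (by omega))
  have e : (fun j => 1 + -(q ^ (4 * j + 3))) = Cq q := by
    funext j; simp [Cq, sub_eq_add_neg]
  rwa [e] at h

lemma hD (hq : ‖q‖ < 1) : Multipliable (Dq q) ∧ (∏' j, Dq q j) ≠ 0 := by
  have h := pack (fun j => -(q ^ (8 * j + 6))) (K := 1) (r := ‖q‖)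
    (fun j => by simpa [sub_eq_add_neg] using one_sub_ne hq (k := 8 * j + 6) (by omega))
    (norm_nonneg q) hq
    (fun j => by simpa using abs_pow_le hq (n := j) (by omega))
  have e : (fun j => 1 + -(q ^ (8 * j + 6))) = Dq q := by
    funext j; simp [Dq, sub_eq_add_neg]
  rwa [e] at h

lemma hF (hq : ‖q‖ < 1) : Multipliable (fq q) ∧ (∏' m, fq q m) ≠ 0 := by
  have hr0 := norm_nonneg q
  have h := pack (fun m => fq q m - 1) (K := (1 - ‖q‖)⁻¹) (r := ‖q‖)
    (fun m => by
      have : 1 + (fq q m - 1) = fq q m := by ring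
      rw [this]
      unfold fq
      split
      · exact one_ne_zero
      · exact one_div_ne_zero (one_sub_ne hq (by omega)))
    hr0 hq
    (fun m => by
      have h1r : 0 < 1 - ‖q‖ := by linarith
      unfold fq
      split
      · simp
        positivity
      · have hne := one_sub_ne hq (k := m + 1) (by omega)
        have : (1:ℂ) / (1 - q ^ (m + 1)) - 1 = q ^ (m + 1) / (1 - q ^ (m + 1)) := by
          field_simp; ring
        rw [this, norm_div]
        have hlow := abs_one_sub_ge hq (k := m + 1) (by omega)
        have hup : ‖q ^ (m + 1)‖ ≤ ‖q‖ ^ m := abs_pow_le hq (by omega)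
        have habs0 : 0 < ‖1 - q ^ (m + 1)‖ := lt_of_lt_of_le h1r hlow
        rw [div_le_iff₀ habs0, mul_comm ((1 - ‖q‖)⁻¹) _, mul_assoc]
        calc ‖q ^ (m + 1)‖ ≤ ‖q‖ ^ m := hup
          _ = ‖q‖ ^ m * ((1 - ‖q‖)⁻¹ * (1 - ‖q‖)) := by
              field_simp
          _ ≤ ‖q‖ ^ m * ((1 - ‖q‖)⁻¹ * ‖1 - q ^ (m + 1)‖) := by
              gcongr)
  have e : (fun m => 1 + (fq q m - 1)) = fq q := by funext m; ring
  rwa [e] at h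

noncomputable def Pq (q : ℂ) : ℂ := ∏' k, Aq q k
noncomputable def Tq (q : ℂ) : ℂ := ∏' j, Bq q j
noncomputable def Vq (q : ℂ) : ℂ := ∏' j, Cq q j
noncomputable def Uq (q : ℂ) : ℂ := ∏' j, Dq q j
noncomputable def Tl (q : ℂ) (n : ℕ) : ℂ := ∏' k, Aq q (k + n)
noncomputable def QA (q : ℂ) (n : ℕ) : ℂ := ∏ k ∈ range n, Aq q k
noncomputable def QB (q : ℂ) (n : ℕ) : ℂ := ∏ j ∈ range n, Bq q j
noncomputable def wq (q : ℂ) (m : ℕ) : ℂ := QB q m * Tl q m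
noncomputable def tq (q : ℂ) (m : ℕ) : ℂ :=
  QB q m * q ^ (2 * m + 2) * (1 + q ^ (2 * m + 1)) * Tl q (m + 1)

lemma hA_shift (hq : ‖q‖ < 1) (n : ℕ) :
    Multipliable (fun k => Aq q (k + n)) ∧ (∏' k, Aq q (k + n)) ≠ 0 := by
  have h := pack (fun k => -(q ^ (2 * (k + n + 1)))) (K := 1) (r := ‖q‖)
    (fun k => by simpa [sub_eq_add_neg] using one_sub_ne hq (k := 2 * (k + n + 1)) (by omega))
    (norm_nonneg q) hq
    (fun k => by simpa using abs_pow_le hq (n := k) (by omega))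
  have e : (fun k => 1 + -(q ^ (2 * (k + n + 1)))) = (fun k => Aq q (k + n)) := by
    funext k; simp [Aq, sub_eq_add_neg]
  rwa [e] at h

lemma Pq_split (hq : ‖q‖ < 1) (n : ℕ) : Pq q = QA q n * Tl q n :=
  (Multipliable.prod_mul_tprod_nat_mul' (k := n) (f := Aq q) (hA_shift hq n).1).symm

lemma QA_ne (hq : ‖q‖ < 1) (n : ℕ) : QA q n ≠ 0 :=
  prod_ne_zero_iff.2 fun k _ => one_sub_ne hq (k := 2 * (k + 1)) (by omega)

lemma Tl_eq (hq : ‖q‖ < 1) (n : ℕ) : Tl q n = Pq q / QA q n := by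
  rw [Pq_split hq n, mul_comm, mul_div_assoc, div_self (QA_ne hq n), mul_one]

lemma Tl_ne (hq : ‖q‖ < 1) (n : ℕ) : Tl q n ≠ 0 := by
  rw [Tl_eq hq n]
  exact div_ne_zero (hA hq).2 (QA_ne hq n)

lemma Tl_peel (hq : ‖q‖ < 1) (n : ℕ) : Tl q n = Aq q n * Tl q (n + 1) := by
  have hm : Multipliable (fun k => Aq q (k + 1 + n)) := by
    have := (hA_shift hq (n + 1)).1
    exact this.congr fun k => by rw [show k + (n + 1) = k + 1 + n by omega]
  have h := tprod_eq_zero_mul' (f := fun j => Aq q (j + n)) hm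
  unfold Tl
  rw [h]
  congr 1
  · simp
  · exact tprod_congr fun k => by rw [show k + 1 + n = k + (n + 1) by omega]

lemma wq_step (hq : ‖q‖ < 1) (m : ℕ) : wq q (m + 1) - wq q m = tq q m := by
  unfold wq tq QB
  rw [prod_range_succ, Tl_peel hq m]
  unfold Aq Bq
  ring

lemma wq_zero : wq q 0 = Pq q := by
  unfold wq QB Tl Pq
  simp

lemma partial_sum (hq : ‖q‖ < 1) (N : ℕ) :
    ∑ i ∈ range N, tq q i = wq q N - wq q 0 := by
  rw [← sum_range_sub (wq q) N]
  exact sum_congr rfl fun i _ => (wq_step hq i).symm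

lemma geom_partial (hq : ‖q‖ < 1) (m : ℕ) :
    ∑ k ∈ range m, ‖q‖ ^ (k + 1) ≤ (1 - ‖q‖)⁻¹ := by
  have hr0 := norm_nonneg q
  calc ∑ k ∈ range m, ‖q‖ ^ (k + 1) ≤ ∑ k ∈ range m, ‖q‖ ^ k :=
        sum_le_sum fun k _ => pow_le_pow_of_le_one hr0 hq.le (by omega)
    _ ≤ ∑' k, ‖q‖ ^ k :=
        Summable.sum_le_tsum _ (fun i _ => pow_nonneg hr0 i) (summable_geometric_of_lt_one hr0 hq)
    _ = (1 - ‖q‖)⁻¹ := tsum_geometric_of_lt_one hr0 hq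

lemma QA_low (hq : ‖q‖ < 1) (n : ℕ) :
    Real.exp (-((1 - ‖q‖)⁻¹ / (1 - ‖q‖))) ≤ ‖QA q n‖ := by
  have h := exp_le_abs_prod_one_add (fun k => -(q ^ (2 * (k + 1))))
    (fun k => ‖q‖ ^ (k + 1)) (d := ‖q‖) (S := (1 - ‖q‖)⁻¹)
    (fun k => by simpa using abs_pow_le hq (n := k + 1) (by omega))
    (fun k => pow_nonneg (norm_nonneg q) _)
    (fun k => by
      calc ‖q‖ ^ (k + 1) ≤ ‖q‖ ^ 1 :=
            pow_le_pow_of_le_one (norm_nonneg q) hq.le (by omega)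
        _ = ‖q‖ := pow_one _)
    hq (geom_partial hq) n
  have e : (fun k => 1 + -(q ^ (2 * (k + 1)))) = Aq q := by
    funext k; simp [Aq, sub_eq_add_neg]
  rwa [e] at h

lemma QB_up (hq : ‖q‖ < 1) (n : ℕ) :
    ‖QB q n‖ ≤ Real.exp ((1 - ‖q‖)⁻¹) := by
  have h := abs_prod_one_add_le (fun j => q ^ (4 * j + 3))
    (fun j => ‖q‖ ^ (j + 1))
    (fun j => by simpa using abs_pow_le hq (n := j + 1) (by omega)) n
  have e : (fun j => 1 + q ^ (4 * j + 3)) = Bq q := by funext j; simp [Bq]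
  rw [e] at h
  exact h.trans (Real.exp_le_exp.2 (geom_partial hq n))

lemma tendsto_QA (hq : ‖q‖ < 1) : Tendsto (QA q) atTop (𝓝 (Pq q)) :=
  (hA hq).1.hasProd.tendsto_prod_nat

lemma tendsto_QB (hq : ‖q‖ < 1) : Tendsto (QB q) atTop (𝓝 (Tq q)) :=
  (hB hq).1.hasProd.tendsto_prod_nat

lemma tendsto_Tl (hq : ‖q‖ < 1) : Tendsto (Tl q) atTop (𝓝 1) := by
  have hP : Pq q ≠ 0 := (hA hq).2
  have h : Tendsto (fun n => Pq q / QA q n) atTop (𝓝 (Pq q / Pq q)) :=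
    tendsto_const_nhds.div (tendsto_QA hq) hP
  rw [div_self hP] at h
  exact h.congr fun n => (Tl_eq hq n).symm

lemma tendsto_wq (hq : ‖q‖ < 1) : Tendsto (wq q) atTop (𝓝 (Tq q)) := by
  have h := (tendsto_QB hq).mul (tendsto_Tl hq)
  rw [mul_one] at h
  exact h

lemma Tl_up (hq : ‖q‖ < 1) (n : ℕ) :
    ‖Tl q n‖ ≤ ‖Pq q‖ / Real.exp (-((1 - ‖q‖)⁻¹ / (1 - ‖q‖))) := by
  rw [Tl_eq hq n, norm_div]
  gcongr
  exact QA_low hq n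

lemma summable_tq (hq : ‖q‖ < 1) : Summable (tq q) := by
  set r := ‖q‖ with hr
  have hr0 : (0:ℝ) ≤ r := norm_nonneg q
  set CB := Real.exp ((1 - r)⁻¹) with hCB
  set CT := ‖Pq q‖ / Real.exp (-((1 - r)⁻¹ / (1 - r))) with hCT
  apply Summable.of_norm_bounded (g := fun m => CB * (r ^ 2 * (r ^ 2) ^ m) * 2 * CT)
  · apply Summable.mul_right
    apply Summable.mul_right
    apply Summable.mul_left
    exact (summable_geometric_of_lt_one (by positivity)
      (by nlinarith)).mul_left _
  · intro m
    have h1 : ‖QB q m‖ ≤ CB := QB_up hq m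
    have h2 : ‖q ^ (2 * m + 2)‖ ≤ r ^ 2 * (r ^ 2) ^ m := by
      rw [norm_pow, ← hr, ← pow_mul, ← pow_add]
      apply pow_le_pow_of_le_one hr0 hq.le
      omega
    have h3 : ‖1 + q ^ (2 * m + 1)‖ ≤ 2 := by
      have h31 := norm_add_le 1 (q ^ (2 * m + 1))
      rw [norm_one] at h31
      have h32 := abs_pow_lt hq (k := 2 * m + 1) (by omega)
      linarith
    have h4 : ‖Tl q (m + 1)‖ ≤ CT := Tl_up hq (m + 1)
    have hn : ‖tq q m‖ = ‖QB q m‖ * ‖q ^ (2 * m + 2)‖ *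
        ‖1 + q ^ (2 * m + 1)‖ * ‖Tl q (m + 1)‖ := by
      unfold tq
      simp [norm_mul]
    rw [hn]
    have hCT0 : 0 ≤ CT := le_trans (norm_nonneg _) h4
    have hCB0 : 0 ≤ CB := le_trans (norm_nonneg _) h1
    have s1 : ‖QB q m‖ * ‖q ^ (2 * m + 2)‖ ≤ CB * (r ^ 2 * (r ^ 2) ^ m) :=
      mul_le_mul h1 h2 (norm_nonneg _) hCB0
    have s2 : ‖QB q m‖ * ‖q ^ (2 * m + 2)‖ *
        ‖1 + q ^ (2 * m + 1)‖ ≤ CB * (r ^ 2 * (r ^ 2) ^ m) * 2 :=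
      mul_le_mul s1 h3 (norm_nonneg _) (by positivity)
    exact mul_le_mul s2 h4 (norm_nonneg _) (by positivity)

lemma hasSum_tq (hq : ‖q‖ < 1) : HasSum (tq q) (Tq q - Pq q) := by
  rw [(summable_tq hq).hasSum_iff_tendsto_nat]
  have h : Tendsto (fun N => wq q N - wq q 0) atTop (𝓝 (Tq q - Pq q)) := by
    rw [wq_zero]
    exact (tendsto_wq hq).sub tendsto_const_nhds
  exact h.congr fun N => (partial_sum hq N).symm

lemma tq_zero : tq q 0 = q ^ 2 * (1 + q) * Tl q 1 := by
  unfold tq QB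
  simp

lemma Pq_one (hq : ‖q‖ < 1) : Pq q = (1 - q ^ 2) * Tl q 1 := by
  rw [Pq_split hq 1]
  congr 1
  unfold QA
  rw [prod_range_one]
  unfold Aq
  norm_num

lemma LHS_eq (hq : ‖q‖ < 1) :
    1 + (q ^ 2 + q ^ 3) / (1 - q ^ 2) +
      ∑' m : ℕ, (∏ j ∈ Finset.range (m + 1), (1 + q ^ (4 * j + 3))) *
        q ^ (2 * m + 4) * (1 + q ^ (2 * m + 3)) /
        (∏ j ∈ Finset.range (m + 2), (1 - q ^ (2 * (j + 1)))) = Tq q / Pq q := by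
  have hP : Pq q ≠ 0 := (hA hq).2
  have hterm : ∀ m : ℕ, (∏ j ∈ Finset.range (m + 1), (1 + q ^ (4 * j + 3))) *
      q ^ (2 * m + 4) * (1 + q ^ (2 * m + 3)) /
      (∏ j ∈ Finset.range (m + 2), (1 - q ^ (2 * (j + 1)))) = tq q (m + 1) * (Pq q)⁻¹ := by
    intro m
    have e1 : tq q (m + 1) = QB q (m + 1) * q ^ (2 * m + 4) * (1 + q ^ (2 * m + 3)) *
        Tl q (m + 2) := by
      unfold tq
      rw [show 2 * (m + 1) + 2 = 2 * m + 4 by omega, show 2 * (m + 1) + 1 = 2 * m + 3 by omega]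
    have e2 : (∏ j ∈ Finset.range (m + 1), (1 + q ^ (4 * j + 3))) = QB q (m + 1) := by
      unfold QB Bq; rfl
    have e3 : (∏ j ∈ Finset.range (m + 2), (1 - q ^ (2 * (j + 1)))) = QA q (m + 2) := by
      unfold QA Aq; rfl
    rw [e1, e2, e3, Pq_split hq (m + 2)]
    have hqa := QA_ne hq (m + 2)
    have htl := Tl_ne hq (m + 2)
    field_simp
  rw [tsum_congr hterm, tsum_mul_right]
  have hsum := (hasSum_tq hq).tsum_eq
  have hshift := Summable.tsum_eq_zero_add (summable_tq hq)
  rw [hsum] at hshift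
  have hts : ∑' m, tq q (m + 1) = (Tq q - Pq q) - tq q 0 := by
    rw [hshift]; ring
  rw [hts, tq_zero]
  have hone : (1 : ℂ) - q ^ 2 ≠ 0 := one_sub_ne hq (by omega)
  have htl1 : Tl q 1 ≠ 0 := Tl_ne hq 1
  rw [Pq_one hq]
  field_simp
  ring

lemma prod8 (hq : ‖q‖ < 1) (N : ℕ) :
    (∏ m ∈ range (8 * N), fq q m) * (∏ k ∈ range (4 * N), Aq q k) *
      (∏ j ∈ range (2 * N), Cq q j) = ∏ j ∈ range N, Dq q j := by
  induction N with
  | zero => simp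
  | succ N ih =>
    have hnew : (∏ i ∈ range 8, fq q (8 * N + i)) * (∏ i ∈ range 4, Aq q (4 * N + i)) *
        (∏ i ∈ range 2, Cq q (2 * N + i)) = Dq q N := by
      rw [show (8:ℕ) = 7 + 1 from rfl, prod_range_succ, prod_range_succ, prod_range_succ,
        prod_range_succ, prod_range_succ, prod_range_succ, prod_range_succ, prod_range_one]
      rw [show (4:ℕ) = 3 + 1 from rfl, prod_range_succ, prod_range_succ, prod_range_succ,
        prod_range_one]
      rw [show (2:ℕ) = 1 + 1 from rfl, prod_range_succ, prod_range_one]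
      have f0 : fq q (8 * N + 0) = 1 := by unfold fq; rw [if_pos (by omega)]
      have f1 : fq q (8 * N + 1) = 1 / (1 - q ^ (8 * N + 1 + 1)) := by
        unfold fq; rw [if_neg (by omega)]
      have f2 : fq q (8 * N + 2) = 1 / (1 - q ^ (8 * N + 2 + 1)) := by
        unfold fq; rw [if_neg (by omega)]
      have f3 : fq q (8 * N + 3) = 1 / (1 - q ^ (8 * N + 3 + 1)) := by
        unfold fq; rw [if_neg (by omega)]
      have f4 : fq q (8 * N + 4) = 1 := by unfold fq; rw [if_pos (by omega)]
      have f5 : fq q (8 * N + 5) = 1 := by unfold fq; rw [if_pos (by omega)]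
      have f6 : fq q (8 * N + 6) = 1 / (1 - q ^ (8 * N + 6 + 1)) := by
        unfold fq; rw [if_neg (by omega)]
      have f7 : fq q (8 * N + 7) = 1 / (1 - q ^ (8 * N + 7 + 1)) := by
        unfold fq; rw [if_neg (by omega)]
      rw [f0, f1, f2, f3, f4, f5, f6, f7]
      unfold Aq Cq Dq
      simp only [Nat.add_zero]
      rw [show 2 * (4 * N + 1) = 8 * N + 2 by ring, show 2 * (4 * N + 1 + 1) = 8 * N + 4 by ring,
        show 2 * (4 * N + 2 + 1) = 8 * N + 6 by ring, show 2 * (4 * N + 3 + 1) = 8 * N + 8 by ring,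
        show 4 * (2 * N) + 3 = 8 * N + 3 by ring, show 4 * (2 * N + 1) + 3 = 8 * N + 7 by ring,
        show 8 * N + 1 + 1 = 8 * N + 2 by ring, show 8 * N + 2 + 1 = 8 * N + 3 by ring,
        show 8 * N + 3 + 1 = 8 * N + 4 by ring, show 8 * N + 6 + 1 = 8 * N + 7 by ring,
        show 8 * N + 7 + 1 = 8 * N + 8 by ring]
      have n2 : (1:ℂ) - q ^ (8 * N + 2) ≠ 0 := one_sub_ne hq (by omega)
      have n3 : (1:ℂ) - q ^ (8 * N + 3) ≠ 0 := one_sub_ne hq (by omega)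
      have n4 : (1:ℂ) - q ^ (8 * N + 4) ≠ 0 := one_sub_ne hq (by omega)
      have n7 : (1:ℂ) - q ^ (8 * N + 7) ≠ 0 := one_sub_ne hq (by omega)
      have n8 : (1:ℂ) - q ^ (8 * N + 8) ≠ 0 := one_sub_ne hq (by omega)
      set y2 := (1:ℂ) - q ^ (8 * N + 2)
      set y3 := (1:ℂ) - q ^ (8 * N + 3)
      set y4 := (1:ℂ) - q ^ (8 * N + 4)
      set y6 := (1:ℂ) - q ^ (8 * N + 6)
      set y7 := (1:ℂ) - q ^ (8 * N + 7)
      set y8 := (1:ℂ) - q ^ (8 * N + 8)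
      clear_value y2 y3 y4 y6 y7 y8
      field_simp
    have e8 : 8 * (N + 1) = 8 * N + 8 := by ring
    have e4 : 4 * (N + 1) = 4 * N + 4 := by ring
    have e2 : 2 * (N + 1) = 2 * N + 2 := by ring
    rw [e8, e4, e2, prod_range_add, prod_range_add, prod_range_add]
    calc (∏ m ∈ range (8 * N), fq q m) * (∏ i ∈ range 8, fq q (8 * N + i)) *
          ((∏ k ∈ range (4 * N), Aq q k) * (∏ i ∈ range 4, Aq q (4 * N + i))) *
          ((∏ j ∈ range (2 * N), Cq q j) * (∏ i ∈ range 2, Cq q (2 * N + i)))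
        = ((∏ m ∈ range (8 * N), fq q m) * (∏ k ∈ range (4 * N), Aq q k) *
            (∏ j ∈ range (2 * N), Cq q j)) *
          ((∏ i ∈ range 8, fq q (8 * N + i)) * (∏ i ∈ range 4, Aq q (4 * N + i)) *
            (∏ i ∈ range 2, Cq q (2 * N + i))) := by ring
      _ = (∏ j ∈ range N, Dq q j) * Dq q N := by rw [ih, hnew]
      _ = ∏ j ∈ range (N + 1), Dq q j := (prod_range_succ _ _).symm

lemma RHS_eq (hq : ‖q‖ < 1) : (∏' m, fq q m) = Tq q / Pq q := by
  have hP : Pq q ≠ 0 := (hA hq).2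
  have hV : Vq q ≠ 0 := (hC hq).2
  have hmono : ∀ c : ℕ, 0 < c → Tendsto (fun N : ℕ => c * N) atTop atTop := by
    intro c hc
    exact tendsto_atTop_atTop.2 fun b => ⟨b, fun a ha => by nlinarith⟩
  have hFp : Tendsto (fun N : ℕ => ∏ m ∈ range (8 * N), fq q m) atTop (𝓝 (∏' m, fq q m)) :=
    ((hF hq).1.hasProd.tendsto_prod_nat).comp (hmono 8 (by norm_num))
  have hAp : Tendsto (fun N : ℕ => ∏ k ∈ range (4 * N), Aq q k) atTop (𝓝 (Pq q)) :=
    ((hA hq).1.hasProd.tendsto_prod_nat).comp (hmono 4 (by norm_num))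
  have hCp : Tendsto (fun N : ℕ => ∏ j ∈ range (2 * N), Cq q j) atTop (𝓝 (Vq q)) :=
    ((hC hq).1.hasProd.tendsto_prod_nat).comp (hmono 2 (by norm_num))
  have hDp : Tendsto (fun N : ℕ => ∏ j ∈ range N, Dq q j) atTop (𝓝 (Uq q)) :=
    (hD hq).1.hasProd.tendsto_prod_nat
  have hcomb : Tendsto (fun N : ℕ => (∏ m ∈ range (8 * N), fq q m) *
      (∏ k ∈ range (4 * N), Aq q k) * (∏ j ∈ range (2 * N), Cq q j)) atTop
      (𝓝 ((∏' m, fq q m) * Pq q * Vq q)) := (hFp.mul hAp).mul hCp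
  have hkey : (∏' m, fq q m) * Pq q * Vq q = Uq q :=
    tendsto_nhds_unique (hcomb.congr fun N => prod8 hq N) hDp
  have hTV : Tq q * Vq q = Uq q := by
    have h1 : (∏' j, (Bq q j * Cq q j)) = Tq q * Vq q := Multipliable.tprod_mul (hB hq).1 (hC hq).1
    have h2 : (∏' j, (Bq q j * Cq q j)) = ∏' j, Dq q j :=
      tprod_congr fun j => by unfold Bq Cq Dq; ring
    rw [← h1]
    exact h2
  have : (∏' m, fq q m) * Pq q * Vq q = Tq q * Vq q := by rw [hkey, hTV]
  have h2 : (∏' m, fq q m) * Pq q = Tq q := mul_right_cancel₀ hV this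
  rw [← h2]
  field_simp


end S10

/-- the series–product identity behind the Glasgow mod 8 theorem.
The sum over `n ≥ 2` is written with `n = m + 2`; `(−q³;q⁴)_{n−1}` is
`∏_{j=0}^{n-2} (1 + q^{4j+3})` and `(q²;q²)_n = ∏_{j=0}^{n-1} (1 − q^{2(j+1)})`. -/
theorem stmt10 (q : ℂ) (hq : ‖q‖ < 1) :
    1 + (q ^ 2 + q ^ 3) / (1 - q ^ 2) +
      ∑' m : ℕ, (∏ j ∈ Finset.range (m + 1), (1 + q ^ (4 * j + 3))) *
        q ^ (2 * m + 4) * (1 + q ^ (2 * m + 3)) /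
        (∏ j ∈ Finset.range (m + 2), (1 - q ^ (2 * (j + 1)))) =
    ∏' m : ℕ, (if (m + 1) % 8 = 1 ∨ (m + 1) % 8 = 5 ∨ (m + 1) % 8 = 6 then 1
      else 1 / (1 - q ^ (m + 1))) := by
  refine (S10.LHS_eq hq).trans ?_
  refine (S10.RHS_eq hq).symm.trans ?_
  rfl
end

section
/- Fix an integer r ≥ −1. For each positive integer v, let p_r(v) be the number of partitions of v with n copies of n such that, when the parts are listed in ascending lexicographic order, the weighted difference between each pair of consecutive parts is at least r. Then ∑_{v≥0} p_r(v)·q^v = ∑_{m≥0} q^{m² + r·m(m−1)/2} / ((q;q)_m · (q;q²)_m) as formal power series in q, where p_r(0) = 1. -/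
open Finset

open PowerSeries

/-- Lexicographic order on parts `m_i = (m, i)` of a partition with n copies of n. -/
def LexLe (p q : ℕ × ℕ) : Prop := p.1 < q.1 ∨ (p.1 = q.1 ∧ p.2 ≤ q.2)

section Aux

/-- Solution sets of weighted equations are finite when weights are positive. -/
lemma sol_finite {s : ℕ} (w : Fin s → ℕ) (hw : ∀ i, 0 < w i) (n : ℕ) :
    Finite {k : Fin s → ℕ // ∑ i, w i * k i = n} := by
  have hb : ∀ (k : {k : Fin s → ℕ // ∑ i, w i * k i = n}) (i : Fin s), k.1 i < n + 1 := by
    intro k i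
    have h1 : w i * k.1 i ≤ n := by
      conv_rhs => rw [← k.2]
      exact Finset.single_le_sum (f := fun i => w i * k.1 i) (fun _ _ => Nat.zero_le _) (mem_univ i)
    nlinarith [Nat.le_mul_of_pos_left (k.1 i) (hw i)]
  apply Finite.of_injective (fun k => (fun i => (⟨k.1 i, hb k i⟩ : Fin (n+1))))
  intro k k' h
  apply Subtype.ext; funext i
  exact congrArg Fin.val (congrFun h i)

lemma card_rec (s : ℕ) (w : Fin (s+1) → ℕ) (hw : ∀ i, 0 < w i) (n : ℕ) :
    Nat.card {k : Fin (s+1) → ℕ // ∑ i, w i * k i = n}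
      = Nat.card {k : Fin s → ℕ // ∑ i, w i.succ * k i = n}
        + if w 0 ≤ n then Nat.card {k : Fin (s+1) → ℕ // ∑ i, w i * k i = n - w 0} else 0 := by
  classical
  have epair : ∀ M : ℕ, {k : Fin (s+1) → ℕ // ∑ i, w i * k i = M}
      ≃ {p : ℕ × (Fin s → ℕ) // w 0 * p.1 + ∑ i, w i.succ * p.2 i = M} := by
    intro M
    refine Equiv.subtypeEquiv (Fin.consEquiv (fun _ => ℕ)).symm ?_
    intro k
    rw [Fin.sum_univ_succ]
    rfl
  haveI hfin0 : ∀ M : ℕ, Finite {k : Fin (s+1) → ℕ // ∑ i, w i * k i = M} :=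
    fun M => sol_finite w hw M
  haveI hfin : ∀ M : ℕ, Finite {p : ℕ × (Fin s → ℕ) // w 0 * p.1 + ∑ i, w i.succ * p.2 i = M} :=
    fun M => Finite.of_equiv _ (epair M)
  rw [Nat.card_congr (epair n)]
  by_cases hn : w 0 ≤ n
  · rw [if_pos hn]
    rw [Nat.card_congr (epair (n - w 0))]
    haveI : Finite {k : Fin s → ℕ // ∑ i, w i.succ * k i = n} :=
      sol_finite _ (fun i => hw i.succ) n
    have E : {p : ℕ × (Fin s → ℕ) // w 0 * p.1 + ∑ i, w i.succ * p.2 i = n}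
        ≃ {k : Fin s → ℕ // ∑ i, w i.succ * k i = n}
          ⊕ {p : ℕ × (Fin s → ℕ) // w 0 * p.1 + ∑ i, w i.succ * p.2 i = n - w 0} := by
      refine ⟨fun a => if h : a.1.1 = 0 then
          .inl ⟨a.1.2, by have h2 := a.2; rw [h] at h2; simpa using h2⟩
        else .inr ⟨(a.1.1 - 1, a.1.2), ?_⟩,
        Sum.elim (fun b => ⟨(0, b.1), by simpa using b.2⟩)
                 (fun b => ⟨(b.1.1 + 1, b.1.2), ?_⟩), ?_, ?_⟩
      · obtain ⟨⟨t, k⟩, hp⟩ := a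
        dsimp only at h hp ⊢
        have h2 : w 0 * (t - 1) + w 0 = w 0 * t := by
          rw [← Nat.mul_succ]; congr 1; omega
        omega
      · obtain ⟨⟨t, k⟩, hp⟩ := b
        dsimp only at hp ⊢
        have h2 : w 0 * (t + 1) = w 0 * t + w 0 := by ring
        omega
      · rintro ⟨⟨t, k⟩, hp⟩
        by_cases h : t = 0
        · subst h; simp
        · simp only [dif_neg h]
          apply Subtype.ext
          simp only [Sum.elim_inr]
          have h2 : t - 1 + 1 = t := by omega
          simp [h2]
      · rintro (⟨k, hk⟩ | ⟨⟨t, k⟩, hp⟩)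
        · simp
        · simp
    rw [Nat.card_congr E, Nat.card_sum]
  · rw [if_neg hn, add_zero]
    have E : {p : ℕ × (Fin s → ℕ) // w 0 * p.1 + ∑ i, w i.succ * p.2 i = n}
        ≃ {k : Fin s → ℕ // ∑ i, w i.succ * k i = n} := by
      have key : ∀ a : {p : ℕ × (Fin s → ℕ) // w 0 * p.1 + ∑ i, w i.succ * p.2 i = n},
          a.1.1 = 0 := by
        rintro ⟨⟨t, k⟩, hp⟩
        dsimp only at hp ⊢
        by_contra h
        have : w 0 ≤ w 0 * t := Nat.le_mul_of_pos_right _ (by omega)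
        omega
      refine ⟨fun a => ⟨a.1.2, ?_⟩, fun b => ⟨(0, b.1), by simpa using b.2⟩, ?_, ?_⟩
      · have h2 := a.2
        rw [key a] at h2
        simpa using h2
      · rintro ⟨⟨t, k⟩, hp⟩
        have h0 := key ⟨⟨t, k⟩, hp⟩
        dsimp only at h0
        subst h0; rfl
      · rintro ⟨k, hk⟩; rfl
    rw [Nat.card_congr E]

/-- The number-of-solutions power series is inverse to `∏ (1 - Xᵂ)`. -/
lemma count_mul_prod (s : ℕ) (w : Fin s → ℕ) (hw : ∀ i, 0 < w i) :
    (PowerSeries.mk fun n => (Nat.card {k : Fin s → ℕ // ∑ i, w i * k i = n} : ℚ)) *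
      ∏ i : Fin s, (1 - (PowerSeries.X : PowerSeries ℚ) ^ (w i)) = 1 := by
  induction s with
  | zero =>
      have h1 : (PowerSeries.mk fun n =>
          (Nat.card {k : Fin 0 → ℕ // ∑ i, w i * k i = n} : ℚ)) = 1 := by
        ext n
        rw [PowerSeries.coeff_mk, PowerSeries.coeff_one]
        rcases n with _ | n
        · simp only [if_pos rfl]
          have : Nat.card {k : Fin 0 → ℕ // ∑ i, w i * k i = 0} = 1 := by
            rw [Nat.card_eq_one_iff_unique]
            constructor
            · constructor
              rintro ⟨k, hk⟩ ⟨k', hk'⟩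
              apply Subtype.ext; funext i; exact i.elim0
            · exact ⟨⟨fun i => i.elim0, by simp⟩⟩
          rw [this, Nat.cast_one]
          simp
        · have : IsEmpty {k : Fin 0 → ℕ // ∑ i, w i * k i = n + 1} := by
            constructor; rintro ⟨k, hk⟩; simp at hk
          rw [Nat.card_of_isEmpty]
          simp
      rw [h1]
      simp
  | succ s ih =>
      have key : (PowerSeries.mk fun n =>
            (Nat.card {k : Fin (s+1) → ℕ // ∑ i, w i * k i = n} : ℚ)) *
            (1 - (PowerSeries.X : PowerSeries ℚ) ^ (w 0)) =
          PowerSeries.mk fun n =>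
            (Nat.card {k : Fin s → ℕ // ∑ i, w i.succ * k i = n} : ℚ) := by
        ext n
        rw [mul_sub, mul_one, map_sub, PowerSeries.coeff_mk,
          PowerSeries.coeff_mul_X_pow', PowerSeries.coeff_mk]
        rw [card_rec s w hw n]
        by_cases hn : w 0 ≤ n
        · rw [if_pos hn, if_pos hn, PowerSeries.coeff_mk]
          push_cast
          ring
        · rw [if_neg hn, if_neg hn, PowerSeries.coeff_mk]
          push_cast
          ring
      rw [Fin.prod_univ_succ, ← mul_assoc, key]
      exact ih (fun i => w i.succ) (fun i => hw i.succ)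

/-- Weight function combining `i+1` and `2i+1`. -/
def wts (m : ℕ) : Fin (m + m) → ℕ :=
  Fin.addCases (fun i => (i : ℕ) + 1) (fun i => 2 * (i : ℕ) + 1)

lemma wts_castAdd (m : ℕ) (j : Fin m) : wts m (Fin.castAdd m j) = (j : ℕ) + 1 := by
  unfold wts; rw [Fin.addCases_left]

lemma wts_natAdd (m : ℕ) (j : Fin m) : wts m (Fin.natAdd m j) = 2 * (j : ℕ) + 1 := by
  unfold wts; rw [Fin.addCases_right]

lemma wts_pos (m : ℕ) : ∀ i, 0 < wts m i := by
  intro i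
  refine Fin.addCases (motive := fun i => 0 < wts m i) (fun j => ?_) (fun j => ?_) i
  · show 0 < wts m (Fin.castAdd m j); rw [wts_castAdd]; omega
  · show 0 < wts m (Fin.natAdd m j); rw [wts_natAdd]; omega

lemma prod_wts (m : ℕ) :
    ∏ i : Fin (m + m), (1 - (PowerSeries.X : PowerSeries ℚ) ^ (wts m i)) =
      (∏ i ∈ Finset.range m, (1 - (PowerSeries.X : PowerSeries ℚ) ^ (i + 1))) *
      (∏ i ∈ Finset.range m, (1 - (PowerSeries.X : PowerSeries ℚ) ^ (2 * i + 1))) := by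
  rw [Fin.prod_univ_add]
  congr 1
  · rw [← Fin.prod_univ_eq_prod_range]
    exact Finset.prod_congr rfl fun i _ => by rw [wts_castAdd]
  · rw [← Fin.prod_univ_eq_prod_range]
    exact Finset.prod_congr rfl fun i _ => by rw [wts_natAdd]

/-- Reshaping solution tuples into pairs. -/
def pairEquiv (m n : ℕ) :
    {k : Fin (m + m) → ℕ // ∑ i, wts m i * k i = n} ≃
    {f : Fin m → ℕ × ℕ //
      ∑ i : Fin m, (((i : ℕ) + 1) * (f i).1 + (2 * (i : ℕ) + 1) * (f i).2) = n} where
  toFun k := ⟨fun i => (k.1 (Fin.castAdd m i), k.1 (Fin.natAdd m i)), by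
    have h := k.2
    rw [Fin.sum_univ_add] at h
    simp only [wts_castAdd, wts_natAdd] at h
    dsimp only
    rw [Finset.sum_add_distrib]
    exact h⟩
  invFun f := ⟨Fin.addCases (fun i => (f.1 i).1) (fun i => (f.1 i).2), by
    rw [Fin.sum_univ_add]
    simp only [wts_castAdd, wts_natAdd, Fin.addCases_left, Fin.addCases_right]
    rw [← Finset.sum_add_distrib]
    exact f.2⟩
  left_inv k := by
    apply Subtype.ext
    funext i
    refine Fin.addCases (motive := fun i =>
      Fin.addCases (fun j => (k.1 (Fin.castAdd m j), k.1 (Fin.natAdd m j)).1)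
        (fun j => (k.1 (Fin.castAdd m j), k.1 (Fin.natAdd m j)).2) i = k.1 i)
      (fun j => ?_) (fun j => ?_) i
    · beta_reduce; rw [Fin.addCases_left]
    · beta_reduce; rw [Fin.addCases_right]
  right_inv f := by
    apply Subtype.ext
    funext i
    dsimp only
    rw [Fin.addCases_left, Fin.addCases_right]

lemma inv_eq_count (m : ℕ) :
    ((∏ i ∈ Finset.range m, (1 - (PowerSeries.X : PowerSeries ℚ) ^ (i + 1))) *
     (∏ i ∈ Finset.range m, (1 - (PowerSeries.X : PowerSeries ℚ) ^ (2 * i + 1))))⁻¹ =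
    PowerSeries.mk fun n => (Nat.card {f : Fin m → ℕ × ℕ //
      ∑ i : Fin m, (((i : ℕ) + 1) * (f i).1 + (2 * (i : ℕ) + 1) * (f i).2) = n} : ℚ) := by
  have hcc : PowerSeries.constantCoeff
      ((∏ i ∈ Finset.range m, (1 - (PowerSeries.X : PowerSeries ℚ) ^ (i + 1))) *
       (∏ i ∈ Finset.range m, (1 - (PowerSeries.X : PowerSeries ℚ) ^ (2 * i + 1)))) ≠ 0 := by
    rw [map_mul, map_prod, map_prod]
    have h1 : ∀ j : ℕ, PowerSeries.constantCoeff
        (1 - (PowerSeries.X : PowerSeries ℚ) ^ (j + 1)) = 1 := by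
      intro j
      rw [map_sub, map_pow, map_one, PowerSeries.constantCoeff_X, zero_pow (Nat.succ_ne_zero j),
        sub_zero]
    simp only [h1]
    norm_num
  rw [PowerSeries.inv_eq_iff_mul_eq_one hcc]
  have hmk : (PowerSeries.mk fun n => (Nat.card {f : Fin m → ℕ × ℕ //
        ∑ i : Fin m, (((i : ℕ) + 1) * (f i).1 + (2 * (i : ℕ) + 1) * (f i).2) = n} : ℚ)) =
      PowerSeries.mk fun n =>
        (Nat.card {k : Fin (m + m) → ℕ // ∑ i, wts m i * k i = n} : ℚ) := by
    ext n
    rw [PowerSeries.coeff_mk, PowerSeries.coeff_mk, Nat.card_congr (pairEquiv m n)]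
  rw [hmk, ← prod_wts m]
  exact count_mul_prod (m + m) (wts m) (wts_pos m)

/-! ### Combinatorial side -/

/-- First coordinates, guarded. -/
def DD (m : ℕ) (f : Fin m → ℕ × ℕ) (i : ℕ) : ℕ := if h : i < m then (f ⟨i, h⟩).1 else 0
/-- Second coordinates, guarded. -/
def CC (m : ℕ) (f : Fin m → ℕ × ℕ) (i : ℕ) : ℕ := if h : i < m then (f ⟨i, h⟩).2 else 0
/-- The "gap" sequence, in list order. -/
def dN (m : ℕ) (f : Fin m → ℕ × ℕ) (j : ℕ) : ℕ := DD m f (m - 1 - j)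
/-- The second entries, in list order. -/
def bN (m : ℕ) (f : Fin m → ℕ × ℕ) (j : ℕ) : ℕ := CC m f (m - 1 - j) + 1
/-- The first entries, in list order. -/
def Af (r : ℤ) (m : ℕ) (f : Fin m → ℕ × ℕ) (k : ℕ) : ℤ :=
  (∑ j ∈ Finset.range (k+1), (dN m f j : ℤ)) + 2 * ∑ j ∈ Finset.range k, (bN m f j : ℤ)
    + (bN m f k : ℤ) + (k : ℤ) * r
/-- The partition list associated to a tuple. -/
def Phi (r : ℤ) (m : ℕ) (f : Fin m → ℕ × ℕ) : List (ℕ × ℕ) :=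
  List.ofFn fun k : Fin m => ((Af r m f k).toNat, bN m f k)
/-- The weighted size of a tuple. -/
def Wf (m : ℕ) (f : Fin m → ℕ × ℕ) : ℕ :=
  ∑ i : Fin m, (((i : ℕ) + 1) * (f i).1 + (2 * (i : ℕ) + 1) * (f i).2)

lemma bN_pos (m : ℕ) (f : Fin m → ℕ × ℕ) (j : ℕ) : 1 ≤ bN m f j := Nat.le_add_left 1 _

lemma sum_bN_ge (m : ℕ) (f : Fin m → ℕ × ℕ) (k : ℕ) :
    (k : ℤ) ≤ ∑ j ∈ Finset.range k, (bN m f j : ℤ) := by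
  calc (k : ℤ) = ∑ _j ∈ Finset.range k, (1 : ℤ) := by simp
  _ ≤ _ := Finset.sum_le_sum fun j _ => by exact_mod_cast bN_pos m f j

lemma Af_sub_b_ge (r : ℤ) (hr : -1 ≤ r) (m : ℕ) (f : Fin m → ℕ × ℕ) (k : ℕ) :
    (k : ℤ) ≤ Af r m f k - bN m f k := by
  have h1 : (0 : ℤ) ≤ ∑ j ∈ Finset.range (k+1), (dN m f j : ℤ) :=
    Finset.sum_nonneg fun j _ => Int.ofNat_nonneg _
  have h2 := sum_bN_ge m f k
  have h3 : -(k : ℤ) ≤ (k : ℤ) * r := by nlinarith [Int.ofNat_nonneg k]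
  unfold Af
  linarith

lemma Af_pos (r : ℤ) (hr : -1 ≤ r) (m : ℕ) (f : Fin m → ℕ × ℕ) (k : ℕ) :
    (bN m f k : ℤ) ≤ Af r m f k := by
  have := Af_sub_b_ge r hr m f k
  have := Int.ofNat_nonneg k
  linarith

lemma Af_toNat (r : ℤ) (hr : -1 ≤ r) (m : ℕ) (f : Fin m → ℕ × ℕ) (k : ℕ) :
    ((Af r m f k).toNat : ℤ) = Af r m f k := by
  have h1 := Af_pos r hr m f k
  have h2 : (0:ℤ) ≤ (bN m f k : ℤ) := Int.ofNat_nonneg _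
  exact Int.toNat_of_nonneg (by linarith)

lemma Af_succ (r : ℤ) (m : ℕ) (f : Fin m → ℕ × ℕ) (k : ℕ) :
    Af r m f (k+1) = Af r m f k + dN m f (k+1) + bN m f k + bN m f (k+1) + r := by
  unfold Af
  rw [Finset.sum_range_succ (fun j => (dN m f j : ℤ)) (k+1),
    Finset.sum_range_succ (fun j => (bN m f j : ℤ)) k]
  push_cast
  ring

lemma Af_lt_succ (r : ℤ) (hr : -1 ≤ r) (m : ℕ) (f : Fin m → ℕ × ℕ) (k : ℕ) :
    Af r m f k < Af r m f (k+1) := by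
  rw [Af_succ]
  have h1 : (0:ℤ) ≤ (dN m f (k+1) : ℤ) := Int.ofNat_nonneg _
  have h2 : (1:ℤ) ≤ (bN m f k : ℤ) := by exact_mod_cast bN_pos m f k
  have h3 : (1:ℤ) ≤ (bN m f (k+1) : ℤ) := by exact_mod_cast bN_pos m f (k+1)
  linarith

lemma Af_mono (r : ℤ) (hr : -1 ≤ r) (m : ℕ) (f : Fin m → ℕ × ℕ) {k1 k2 : ℕ}
    (h : k1 < k2) : Af r m f k1 < Af r m f k2 := by
  obtain ⟨d, rfl⟩ : ∃ d, k2 = k1 + 1 + d := ⟨k2 - (k1+1), by omega⟩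
  clear h
  induction d with
  | zero => exact Af_lt_succ r hr m f k1
  | succ t ih =>
    have h2 := Af_lt_succ r hr m f (k1 + 1 + t)
    have h3 : k1 + 1 + (t + 1) = (k1 + 1 + t) + 1 := by ring
    rw [h3]
    exact lt_trans ih h2

lemma sum_interchange (g : ℕ → ℤ) (m : ℕ) :
    ∑ k ∈ Finset.range m, ∑ j ∈ Finset.range (k+1), g j
      = ∑ j ∈ Finset.range m, ((m : ℤ) - j) * g j := by
  induction m with
  | zero => simp
  | succ M ih =>
    rw [Finset.sum_range_succ, ih]
    conv_rhs => rw [Finset.sum_range_succ]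
    have h4 : ∑ j ∈ Finset.range M, (((M+1 : ℕ) : ℤ) - j) * g j
        = ∑ j ∈ Finset.range M, (((M:ℤ) - j) * g j + g j) := by
      apply Finset.sum_congr rfl
      intro j _
      push_cast
      ring
    rw [h4, Finset.sum_add_distrib, Finset.sum_range_succ g M]
    push_cast
    ring

lemma sum_gauss (m : ℕ) : 2 * ∑ j ∈ Finset.range m, (j : ℤ) = (m : ℤ) * ((m:ℤ) - 1) := by
  induction m with
  | zero => simp
  | succ M ih =>
    rw [Finset.sum_range_succ]
    push_cast
    push_cast at ih
    linarith

lemma Wf_cast (m : ℕ) (f : Fin m → ℕ × ℕ) :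
    (Wf m f : ℤ) = ∑ j ∈ Finset.range m, (((j:ℤ) + 1) * (DD m f j : ℤ)
      + (2 * (j:ℤ) + 1) * (CC m f j : ℤ)) := by
  unfold Wf
  push_cast
  rw [← Fin.sum_univ_eq_sum_range
    (fun j => ((j:ℤ) + 1) * (DD m f j : ℤ) + (2 * (j:ℤ) + 1) * (CC m f j : ℤ)) m]
  apply Finset.sum_congr rfl
  intro i _
  have h1 : DD m f (i : ℕ) = (f i).1 := by unfold DD; rw [dif_pos i.isLt]
  have h2 : CC m f (i : ℕ) = (f i).2 := by unfold CC; rw [dif_pos i.isLt]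
  rw [h1, h2]

lemma two_sum_Af (r : ℤ) (m : ℕ) (f : Fin m → ℕ × ℕ) :
    2 * ∑ k ∈ Finset.range m, Af r m f k
      = 2 * (m:ℤ)^2 + r * (m:ℤ) * ((m:ℤ) - 1) + 2 * (Wf m f : ℤ) := by
  have hsplit : ∑ k ∈ Finset.range m, Af r m f k
      = (∑ k ∈ Finset.range m, ∑ j ∈ Finset.range (k+1), (dN m f j : ℤ))
        + 2 * (∑ k ∈ Finset.range m, ∑ j ∈ Finset.range k, (bN m f j : ℤ))
        + (∑ k ∈ Finset.range m, (bN m f k : ℤ))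
        + (∑ k ∈ Finset.range m, (k : ℤ)) * r := by
    unfold Af
    rw [Finset.sum_add_distrib, Finset.sum_add_distrib, Finset.sum_add_distrib,
      ← Finset.mul_sum, ← Finset.sum_mul]
  -- inner-sum over range k  =  over range (k+1) minus last
  have hb2 : ∑ k ∈ Finset.range m, ∑ j ∈ Finset.range k, (bN m f j : ℤ)
      = (∑ k ∈ Finset.range m, ∑ j ∈ Finset.range (k+1), (bN m f j : ℤ))
        - ∑ k ∈ Finset.range m, (bN m f k : ℤ) := by
    rw [eq_sub_iff_add_eq, ← Finset.sum_add_distrib]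
    apply Finset.sum_congr rfl
    intro k _
    rw [Finset.sum_range_succ]
  have hd := sum_interchange (fun j => (dN m f j : ℤ)) m
  have hbI := sum_interchange (fun j => (bN m f j : ℤ)) m
  -- reflect the d-sum
  have hdrefl : ∑ j ∈ Finset.range m, ((m:ℤ) - j) * (dN m f j : ℤ)
      = ∑ j ∈ Finset.range m, ((j:ℤ) + 1) * (DD m f j : ℤ) := by
    rw [← Finset.sum_range_reflect (fun j => ((m:ℤ) - j) * (dN m f j : ℤ)) m]
    apply Finset.sum_congr rfl
    intro j hj
    rw [Finset.mem_range] at hj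
    have h1 : ((m - 1 - j : ℕ) : ℤ) = (m:ℤ) - 1 - j := by omega
    have h2 : dN m f (m - 1 - j) = DD m f j := by
      unfold dN; congr 1; omega
    rw [h1, h2]
    ring
  -- reflect the b-sum
  have hbrefl : ∑ j ∈ Finset.range m, (2 * ((m:ℤ) - j) - 1) * (bN m f j : ℤ)
      = ∑ j ∈ Finset.range m, (2 * (j:ℤ) + 1) * ((CC m f j : ℤ) + 1) := by
    rw [← Finset.sum_range_reflect (fun j => (2 * ((m:ℤ) - j) - 1) * (bN m f j : ℤ)) m]
    apply Finset.sum_congr rfl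
    intro j hj
    rw [Finset.mem_range] at hj
    have h1 : ((m - 1 - j : ℕ) : ℤ) = (m:ℤ) - 1 - j := by omega
    have h2 : (bN m f (m - 1 - j) : ℤ) = (CC m f j : ℤ) + 1 := by
      unfold bN
      have : CC m f (m - 1 - (m - 1 - j)) = CC m f j := by congr 1; omega
      rw [← this]
      push_cast
      ring
    rw [h1, h2]
    ring
  have hsq : ∑ j ∈ Finset.range m, (2 * (j:ℤ) + 1) = (m:ℤ)^2 := by
    have hg := sum_gauss m
    rw [Finset.sum_add_distrib, ← Finset.mul_sum, Finset.sum_const, Finset.card_range,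
      nsmul_eq_mul, mul_one]
    nlinarith [hg]
  have hWf := Wf_cast m f
  -- assemble
  have expand1 : ∑ j ∈ Finset.range m, (2 * ((m:ℤ) - j) - 1) * (bN m f j : ℤ)
      = 2 * (∑ j ∈ Finset.range m, ((m:ℤ) - j) * (bN m f j : ℤ))
        - ∑ j ∈ Finset.range m, (bN m f j : ℤ) := by
    rw [Finset.mul_sum, ← Finset.sum_sub_distrib]
    apply Finset.sum_congr rfl
    intro j _
    ring
  have expand2 : ∑ j ∈ Finset.range m, (2 * (j:ℤ) + 1) * ((CC m f j : ℤ) + 1)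
      = ∑ j ∈ Finset.range m, (2 * (j:ℤ) + 1) * (CC m f j : ℤ) + (m:ℤ)^2 := by
    rw [← hsq, ← Finset.sum_add_distrib]
    apply Finset.sum_congr rfl
    intro j _
    ring
  have expand3 : (Wf m f : ℤ) = ∑ j ∈ Finset.range m, ((j:ℤ) + 1) * (DD m f j : ℤ)
      + ∑ j ∈ Finset.range m, (2 * (j:ℤ) + 1) * (CC m f j : ℤ) := by
    rw [hWf, Finset.sum_add_distrib]
  have hg := sum_gauss m
  rw [hsplit, hb2, hd, hbI]
  rw [expand3]
  have key : 2 * (∑ j ∈ Finset.range m, ((m:ℤ) - j) * (bN m f j : ℤ))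
      = ∑ j ∈ Finset.range m, (2 * (j:ℤ) + 1) * (CC m f j : ℤ) + (m:ℤ)^2
        + ∑ j ∈ Finset.range m, (bN m f j : ℤ) := by
    have h5 := hbrefl
    rw [expand2] at h5
    rw [expand1] at h5
    linarith
  rw [hdrefl]
  linear_combination 2 * key + r * hg

lemma Phi_length (r : ℤ) (m : ℕ) (f : Fin m → ℕ × ℕ) : (Phi r m f).length = m := by
  simp [Phi]

lemma Phi_sum_int (r : ℤ) (hr : -1 ≤ r) (m : ℕ) (f : Fin m → ℕ × ℕ) :
    ((((Phi r m f).map Prod.fst).sum : ℕ) : ℤ) = ∑ k ∈ Finset.range m, Af r m f k := by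
  unfold Phi
  rw [List.map_ofFn, List.sum_ofFn]
  push_cast
  rw [← Fin.sum_univ_eq_sum_range (fun k => Af r m f k) m]
  apply Finset.sum_congr rfl
  intro i _
  exact Af_toNat r hr m f i

lemma Phi_sum (r : ℤ) (hr : -1 ≤ r) (m : ℕ) (f : Fin m → ℕ × ℕ) (em : ℕ)
    (hem : 2 * (em : ℤ) = 2 * (m:ℤ)^2 + r * (m:ℤ) * ((m:ℤ) - 1)) :
    ((Phi r m f).map Prod.fst).sum = em + Wf m f := by
  have h1 := Phi_sum_int r hr m f
  have h2 := two_sum_Af r m f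
  have h3 : ((((Phi r m f).map Prod.fst).sum : ℕ) : ℤ) = ((em + Wf m f : ℕ) : ℤ) := by
    rw [h1]
    push_cast
    linarith
  exact_mod_cast h3

lemma Phi_bounds (r : ℤ) (hr : -1 ≤ r) (m : ℕ) (f : Fin m → ℕ × ℕ) :
    ∀ p ∈ Phi r m f, 1 ≤ p.2 ∧ p.2 ≤ p.1 := by
  intro p hp
  rw [Phi, List.mem_ofFn] at hp
  obtain ⟨k, rfl⟩ := hp
  refine ⟨bN_pos m f k, ?_⟩
  have h1 := Af_pos r hr m f k
  have h2 := Af_toNat r hr m f k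
  dsimp only
  omega

lemma Phi_sorted (r : ℤ) (hr : -1 ≤ r) (m : ℕ) (f : Fin m → ℕ × ℕ) :
    (Phi r m f).Pairwise LexLe := by
  rw [Phi, List.pairwise_ofFn]
  intro i j hij
  unfold LexLe
  left
  have h1 := Af_mono r hr m f (k1 := i) (k2 := j) hij
  have h2 := Af_toNat r hr m f i
  have h3 := Af_toNat r hr m f j
  dsimp only
  omega

lemma Phi_chain (r : ℤ) (hr : -1 ≤ r) (m : ℕ) (f : Fin m → ℕ × ℕ) :
    (Phi r m f).Chain' (fun p q => r ≤ (q.1 : ℤ) - (p.1 : ℤ) - (q.2 : ℤ) - (p.2 : ℤ)) := by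
  have hg : ∀ (t : ℕ) (ht : t < (Phi r m f).length),
      (Phi r m f).get ⟨t, ht⟩ = ((Af r m f t).toNat, bN m f t) := by
    intro t ht
    simp [Phi, List.get_ofFn]
  rw [List.Chain', List.isChain_iff_getElem]
  intro i hi
  simp only [List.get_eq_getElem] at hg
  rw [hg i (by omega), hg (i+1) hi]
  have h2 := Af_toNat r hr m f i
  have h3 := Af_toNat r hr m f (i+1)
  have h4 := Af_succ r m f i
  have h5 : (0:ℤ) ≤ (dN m f (i+1) : ℤ) := Int.ofNat_nonneg _
  dsimp only
  push_cast
  rw [h2, h3]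
  linarith

lemma Phi_inj (r : ℤ) (hr : -1 ≤ r) (m : ℕ) (f f' : Fin m → ℕ × ℕ)
    (h : Phi r m f = Phi r m f') : f = f' := by
  rw [Phi, Phi, List.ofFn_inj] at h
  have hbN : ∀ j, j < m → bN m f j = bN m f' j := by
    intro j hj
    exact congrArg Prod.snd (congrFun h ⟨j, hj⟩)
  have hAf : ∀ j, j < m → Af r m f j = Af r m f' j := by
    intro j hj
    have h1 := congrArg Prod.fst (congrFun h ⟨j, hj⟩)
    dsimp only at h1
    have t1 := Af_toNat r hr m f j
    have t2 := Af_toNat r hr m f' j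
    omega
  have hS : ∀ k, k < m → ∑ j ∈ Finset.range (k+1), (dN m f j : ℤ)
      = ∑ j ∈ Finset.range (k+1), (dN m f' j : ℤ) := by
    intro k hk
    have h1 := hAf k hk
    unfold Af at h1
    have h2 : ∑ j ∈ Finset.range k, (bN m f j : ℤ) = ∑ j ∈ Finset.range k, (bN m f' j : ℤ) :=
      Finset.sum_congr rfl fun j hj => by
        rw [Finset.mem_range] at hj
        exact_mod_cast congrArg Nat.cast (hbN j (by omega))
    have h3 : bN m f k = bN m f' k := hbN k hk
    rw [h2, h3] at h1
    linarith
  have hdN : ∀ k, k < m → dN m f k = dN m f' k := by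
    intro k hk
    cases k with
    | zero =>
        have h1 := hS 0 hk
        rw [Finset.sum_range_one, Finset.sum_range_one] at h1
        exact_mod_cast h1
    | succ t =>
        have h1 := hS (t+1) hk
        have h2 := hS t (by omega)
        rw [Finset.sum_range_succ (fun j => (dN m f j : ℤ)) (t+1),
          Finset.sum_range_succ (fun j => (dN m f' j : ℤ)) (t+1)] at h1
        rw [h2] at h1
        have h3 : (dN m f (t+1) : ℤ) = dN m f' (t+1) := by linarith
        exact_mod_cast h3
  funext i
  have hlt : m - 1 - (i : ℕ) < m := by omega
  have hidx : m - 1 - (m - 1 - (i : ℕ)) = (i : ℕ) := by omega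
  have h1 : (f i).1 = (f' i).1 := by
    have hd := hdN (m - 1 - (i : ℕ)) hlt
    unfold dN at hd
    rw [hidx] at hd
    unfold DD at hd
    rw [dif_pos i.isLt, dif_pos i.isLt] at hd
    simpa using hd
  have h2 : (f i).2 = (f' i).2 := by
    have hb := hbN (m - 1 - (i : ℕ)) hlt
    unfold bN at hb
    rw [hidx] at hb
    unfold CC at hb
    rw [dif_pos i.isLt, dif_pos i.isLt] at hb
    simpa using hb
  exact Prod.ext h1 h2

lemma Phi_surj (r : ℤ) (hr : -1 ≤ r) (l : List (ℕ × ℕ))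
    (hbd : ∀ p ∈ l, 1 ≤ p.2 ∧ p.2 ≤ p.1)
    (hch : l.Chain' (fun p q => r ≤ (q.1 : ℤ) - (p.1 : ℤ) - (q.2 : ℤ) - (p.2 : ℤ))) :
    ∃ f : Fin l.length → ℕ × ℕ, Phi r l.length f = l := by
  set m := l.length with hm
  set aN : ℕ → ℕ := fun k => (l.getD k (0,0)).1 with haN
  set bNl : ℕ → ℕ := fun k => (l.getD k (0,0)).2 with hbNl
  have hget : ∀ k (hk : k < m), l.get ⟨k, hk⟩ = (aN k, bNl k) := by
    intro k hk
    rw [haN, hbNl]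
    dsimp only
    rw [List.getD_eq_getElem l (0,0) hk]
    rfl
  have hbk : ∀ k, k < m → 1 ≤ bNl k ∧ bNl k ≤ aN k := by
    intro k hk
    have h1 := hbd (l.get ⟨k, hk⟩) (l.get_mem _)
    rw [hget k hk] at h1
    exact h1
  have hchk : ∀ k, k + 1 < m → r ≤ (aN (k+1) : ℤ) - aN k - bNl (k+1) - bNl k := by
    intro k hk
    rw [List.Chain', List.isChain_iff_getElem] at hch
    simp only [List.get_eq_getElem] at hget
    have h1 := hch k (by omega)
    rw [hget k (by omega), hget (k+1) (by omega)] at h1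
    dsimp only at h1
    linarith
  set dZ : ℕ → ℤ := fun k => if k = 0 then (aN 0 : ℤ) - bNl 0
    else (aN k : ℤ) - aN (k-1) - bNl (k-1) - bNl k - r with hdZdef
  have hdZ : ∀ k, k < m → 0 ≤ dZ k := by
    intro k hk
    rcases Nat.eq_zero_or_pos k with h0 | h0
    · subst h0
      have := hbk 0 hk
      simp only [hdZdef, if_pos rfl]
      omega
    · obtain ⟨t, rfl⟩ : ∃ t, k = t + 1 := ⟨k - 1, by omega⟩
      have h1 := hchk t hk
      simp only [hdZdef, if_neg (Nat.succ_ne_zero t), Nat.add_sub_cancel]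
      linarith
  refine ⟨fun i => ((dZ (m - 1 - (i : ℕ))).toNat, bNl (m - 1 - (i : ℕ)) - 1), ?_⟩
  set f : Fin m → ℕ × ℕ :=
    fun i => ((dZ (m - 1 - (i : ℕ))).toNat, bNl (m - 1 - (i : ℕ)) - 1) with hf
  have hidx : ∀ k, k < m → m - 1 - (m - 1 - k) = k := by intro k hk; omega
  have hdNf : ∀ k, k < m → (dN m f k : ℤ) = dZ k := by
    intro k hk
    unfold dN DD
    rw [dif_pos (show m - 1 - k < m by omega)]
    simp only [hf]
    rw [hidx k hk]
    exact Int.toNat_of_nonneg (hdZ k hk)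
  have hbNf : ∀ k, k < m → bN m f k = bNl k := by
    intro k hk
    unfold bN CC
    rw [dif_pos (show m - 1 - k < m by omega)]
    simp only [hf]
    rw [hidx k hk]
    have := (hbk k hk).1
    omega
  have hAf : ∀ k, k < m → Af r m f k = (aN k : ℤ) := by
    intro k
    induction k with
    | zero =>
        intro hk
        unfold Af
        rw [Finset.sum_range_one]
        simp only [Finset.range_zero, Finset.sum_empty]
        rw [hdNf 0 hk, hbNf 0 hk]
        simp only [hdZdef, if_pos rfl]
        push_cast
        ring
    | succ t ih =>
        intro hk
        have ht : t < m := by omega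
        rw [Af_succ, ih ht, hdNf (t+1) hk, hbNf t ht, hbNf (t+1) hk]
        simp only [hdZdef, if_neg (Nat.succ_ne_zero t), Nat.add_sub_cancel]
        push_cast
        ring
  -- conclude
  apply List.ext_getElem
  · simp [Phi, hm]
  · intro k h1 h2
    have hk : k < m := by simpa [Phi] using h1
    have h3 : (Phi r m f)[k] = ((Af r m f k).toNat, bN m f k) := by
      simp [Phi]
    rw [h3]
    have h4 : l[k] = (aN k, bNl k) := by
      have := hget k hk
      simpa using this
    rw [h4, hAf k hk, hbNf k hk]
    simp

lemma length_le_sum_fst (l : List (ℕ × ℕ)) (hbd : ∀ p ∈ l, 1 ≤ p.2 ∧ p.2 ≤ p.1) :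
    l.length ≤ (l.map Prod.fst).sum := by
  induction l with
  | nil => simp
  | cons p t ih =>
    have h1 := hbd p List.mem_cons_self
    have h2 := ih fun q hq => hbd q (List.mem_cons_of_mem p hq)
    simp only [List.length_cons, List.map_cons, List.sum_cons]
    omega

/-- The type of tuples of weighted size `v - em`. -/
abbrev Tt (em v m : ℕ) : Type := {f : Fin m → ℕ × ℕ // em + Wf m f = v}

lemma Tt_empty (em v m : ℕ) (h : v < em) : IsEmpty (Tt em v m) := by
  constructor
  rintro ⟨f, hf⟩
  omega

def Tt_equiv (em v m : ℕ) (h : em ≤ v) :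
    {f : Fin m → ℕ × ℕ //
      ∑ i : Fin m, (((i : ℕ) + 1) * (f i).1 + (2 * (i : ℕ) + 1) * (f i).2) = v - em}
      ≃ Tt em v m :=
  Equiv.subtypeEquivRight fun f => by unfold Wf; omega

lemma Tt_finite (em v m : ℕ) : Finite (Tt em v m) := by
  by_cases h : em ≤ v
  · haveI := sol_finite (wts m) (wts_pos m) (v - em)
    exact Finite.of_equiv _ ((pairEquiv m (v - em)).trans (Tt_equiv em v m h))
  · haveI := Tt_empty em v m (by omega)
    infer_instance

lemma coeff_term (em v m : ℕ) :
    (PowerSeries.coeff v) ((PowerSeries.X : PowerSeries ℚ) ^ em *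
      ((∏ i ∈ Finset.range m, (1 - (PowerSeries.X : PowerSeries ℚ) ^ (i + 1))) *
       (∏ i ∈ Finset.range m, (1 - (PowerSeries.X : PowerSeries ℚ) ^ (2 * i + 1))))⁻¹)
      = (Nat.card (Tt em v m) : ℚ) := by
  rw [inv_eq_count, PowerSeries.coeff_X_pow_mul']
  by_cases h : em ≤ v
  · rw [if_pos h, PowerSeries.coeff_mk, Nat.card_congr (Tt_equiv em v m h)]
  · rw [if_neg h]
    haveI := Tt_empty em v m (by omega)
    rw [Nat.card_of_isEmpty]
    simp

lemma nat_card_sigma {ι : Type*} [Fintype ι] (T : ι → Type*) [hT : ∀ i, Finite (T i)] :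
    Nat.card ((i : ι) × T i) = ∑ i, Nat.card (T i) := by
  letI : ∀ i, Fintype (T i) := fun i => Fintype.ofFinite (T i)
  rw [Nat.card_eq_fintype_card, Fintype.card_sigma]
  exact Finset.sum_congr rfl fun i _ => (Nat.card_eq_fintype_card).symm

end Aux

/-- Corollary 25 of the paper, stated coefficientwise:
`∑_v p_r(v) q^v = ∑_m q^{m² + r·m(m−1)/2} / ((q;q)_m (q;q²)_m)`.
The exponents `e m` satisfy `2·(e m) = 2m² + r·m(m−1)`; since the `m`-th term
has order at least `m`, the sum may be truncated at `m = v` when extracting the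
coefficient of `q^v`.  A partition with n copies of n is represented by its
list of parts in ascending lexicographic order; the empty list accounts for
`p_r(0) = 1`. -/

theorem stmt15 (r : ℤ) (hr : -1 ≤ r) (e : ℕ → ℕ)
    (he : ∀ m : ℕ, 2 * (e m : ℤ) = 2 * (m : ℤ) ^ 2 + r * (m : ℤ) * ((m : ℤ) - 1))
    (v : ℕ) :
    ({l : List (ℕ × ℕ) | l.Pairwise LexLe ∧ (∀ p ∈ l, 1 ≤ p.2 ∧ p.2 ≤ p.1) ∧
      l.Chain' (fun p q => r ≤ (q.1 : ℤ) - (p.1 : ℤ) - (q.2 : ℤ) - (p.2 : ℤ)) ∧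
      (l.map Prod.fst).sum = v}.ncard : ℚ) =
    PowerSeries.coeff v (∑ m ∈ Finset.range (v + 1),
      (PowerSeries.X : PowerSeries ℚ) ^ (e m) *
        ((∏ i ∈ Finset.range m, (1 - (PowerSeries.X : PowerSeries ℚ) ^ (i + 1))) *
         (∏ i ∈ Finset.range m, (1 - (PowerSeries.X : PowerSeries ℚ) ^ (2 * i + 1))))⁻¹) := by
  classical
  set S : Set (List (ℕ × ℕ)) := {l : List (ℕ × ℕ) | l.Pairwise LexLe ∧
      (∀ p ∈ l, 1 ≤ p.2 ∧ p.2 ≤ p.1) ∧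
      l.Chain' (fun p q => r ≤ (q.1 : ℤ) - (p.1 : ℤ) - (q.2 : ℤ) - (p.2 : ℤ)) ∧
      (l.map Prod.fst).sum = v} with hSdef
  -- the sigma type of tuples
  haveI : ∀ m : Fin (v+1), Finite (Tt (e (m : ℕ)) v (m : ℕ)) :=
    fun m => Tt_finite _ _ _
  -- the bijection
  have hsum_eq : ∀ (m : Fin (v+1)) (x : Tt (e (m : ℕ)) v (m : ℕ)),
      ((Phi r (m : ℕ) x.1).map Prod.fst).sum = v := by
    intro m x
    rw [Phi_sum r hr _ x.1 (e (m : ℕ)) (he (m : ℕ))]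
    exact x.2
  let Psi : ((m : Fin (v+1)) × Tt (e (m : ℕ)) v (m : ℕ)) → S :=
    fun x => ⟨Phi r (x.1 : ℕ) x.2.1,
      Phi_sorted r hr _ x.2.1, Phi_bounds r hr _ x.2.1, Phi_chain r hr _ x.2.1,
      hsum_eq x.1 x.2⟩
  have hbij : Function.Bijective Psi := by
    constructor
    · rintro ⟨⟨m, hm⟩, f, hf⟩ ⟨⟨m', hm'⟩, f', hf'⟩ hEq
      have hl : Phi r m f = Phi r m' f' := congrArg Subtype.val hEq
      have hmm : m = m' := by
        have := congrArg List.length hl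
        rwa [Phi_length, Phi_length] at this
      subst hmm
      have hff : f = f' := Phi_inj r hr m f f' hl
      subst hff
      rfl
    · rintro ⟨l, hl⟩
      obtain ⟨hsort, hbd, hch, hsum⟩ := hl
      obtain ⟨f, hPhi⟩ := Phi_surj r hr l hbd hch
      have hmv : l.length < v + 1 := by
        have := length_le_sum_fst l hbd
        omega
      have hf : e l.length + Wf l.length f = v := by
        have h1 := Phi_sum r hr l.length f (e l.length) (he l.length)
        rw [hPhi] at h1
        omega
      refine ⟨⟨⟨l.length, hmv⟩, f, hf⟩, ?_⟩
      apply Subtype.ext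
      exact hPhi
  -- count
  have hcard : (S.ncard : ℚ) = ∑ m ∈ Finset.range (v+1), (Nat.card (Tt (e m) v m) : ℚ) := by
    rw [← Nat.card_coe_set_eq]
    rw [← Nat.card_congr (Equiv.ofBijective Psi hbij)]
    rw [nat_card_sigma]
    rw [← Fin.sum_univ_eq_sum_range (fun m => (Nat.card (Tt (e m) v m) : ℚ)) (v+1)]
    push_cast
    rfl
  rw [hcard, map_sum]
  apply Finset.sum_congr rfl
  intro m _
  exact (coeff_term (e m) v m).symm
end

section
/- For every positive integer v, the number of partitions of v with n copies of n in which, when the parts are listed in ascending lexicographic order, the weighted difference between each pair of consecutive parts is exactly 0 and the smallest part has its value equal to its subscript (i.e., is of the form j_j), equals the coefficient of q^v in the series ∑_{n≥0} q^{n²} / (q;q²)_n. -/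
open Finset

namespace Stmt17Aux

/-- Weighted sum of a list of naturals: entry at distance `k` from the end gets
weight `2*k+1` (positions counted from the end, last entry weight 1). -/
def V : List ℕ → ℕ
  | [] => 0
  | a :: t => (2 * t.length + 1) * a + V t

/-- Build a partition with n copies of n from a list of subscripts. -/
def build : ℕ → List ℕ → List (ℕ × ℕ)
  | _, [] => []
  | s, a :: t => (s + a, a) :: build (s + 2 * a) t

lemma build_nil (s : ℕ) : build s [] = [] := rfl

lemma build_cons (s a : ℕ) (t : List ℕ) :
    build s (a :: t) = (s + a, a) :: build (s + 2 * a) t := rfl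

/-- The counting function. -/
def L : ℕ → ℕ → ℕ
  | 0, M => if M = 0 then 1 else 0
  | n + 1, M => ∑ d ∈ range (M + 1), if (2 * n + 1) ∣ d then L n (M - d) else 0

lemma L_zero (M : ℕ) : L 0 M = if M = 0 then 1 else 0 := rfl

lemma L_succ (n M : ℕ) :
    L (n + 1) M = ∑ d ∈ range (M + 1), if (2 * n + 1) ∣ d then L n (M - d) else 0 := rfl

/-- The finset of lists counted by `L`. -/
def F : ℕ → ℕ → Finset (List ℕ)
  | 0, M => if M = 0 then {[]} else ∅
  | n + 1, M => (range (M + 1)).biUnion fun d =>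
      if (2 * n + 1) ∣ d then (F n (M - d)).image (d / (2 * n + 1) :: ·) else ∅

lemma mem_F : ∀ (n M : ℕ) (l : List ℕ), l ∈ F n M ↔ l.length = n ∧ V l = M
  | 0, M, l => by
    show l ∈ (if M = 0 then ({[]} : Finset (List ℕ)) else ∅) ↔ _
    split_ifs with h
    · subst h
      simp only [Finset.mem_singleton]
      constructor
      · rintro rfl; exact ⟨rfl, rfl⟩
      · rintro ⟨h1, _⟩; exact List.length_eq_zero_iff.mp h1
    · simp only [Finset.notMem_empty, false_iff, not_and]
      intro h1
      rw [List.length_eq_zero_iff.mp h1]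
      simpa [V] using Ne.symm h
  | n + 1, M, l => by
    show l ∈ (range (M + 1)).biUnion _ ↔ _
    rw [Finset.mem_biUnion]
    constructor
    · rintro ⟨d, hd, hl⟩
      rw [Finset.mem_range] at hd
      split_ifs at hl with hdvd
      · obtain ⟨t, ht, rfl⟩ := Finset.mem_image.mp hl
        obtain ⟨htl, htV⟩ := (mem_F n _ t).mp ht
        have hmul : (2 * n + 1) * (d / (2 * n + 1)) = d := Nat.mul_div_cancel' hdvd
        refine ⟨by simp [htl], ?_⟩
        show (2 * t.length + 1) * (d / (2 * n + 1)) + V t = M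
        rw [htl, htV, hmul]
        omega
      · simp at hl
    · rintro ⟨hlen, hV⟩
      obtain ⟨a, t, rfl⟩ : ∃ a t, l = a :: t := by
        cases l with
        | nil => simp at hlen
        | cons a t => exact ⟨a, t, rfl⟩
      have htl : t.length = n := by simpa using hlen
      have hVl : (2 * n + 1) * a + V t = M := by
        have : V (a :: t) = (2 * t.length + 1) * a + V t := rfl
        rw [this, htl] at hV
        exact hV
      have key : ∀ D, D + V t = M → V t = M - D ∧ D ≤ M := fun D h => by omega
      obtain ⟨h1, h2⟩ := key _ hVl
      refine ⟨(2 * n + 1) * a, Finset.mem_range.mpr (by omega), ?_⟩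
      rw [if_pos ⟨a, rfl⟩]
      refine Finset.mem_image.mpr ⟨t, (mem_F n _ t).mpr ⟨htl, h1⟩, ?_⟩
      rw [Nat.mul_div_cancel_left a (by omega : 0 < 2 * n + 1)]

lemma card_F : ∀ n M, (F n M).card = L n M
  | 0, M => by
    show (if M = 0 then ({[]} : Finset (List ℕ)) else ∅).card = _
    rw [L_zero]
    split_ifs <;> simp
  | n + 1, M => by
    show ((range (M + 1)).biUnion _).card = _
    rw [L_succ, Finset.card_biUnion]
    · refine Finset.sum_congr rfl fun d _ => ?_
      split_ifs with h
      · rw [Finset.card_image_of_injective _ (List.cons_injective), card_F n (M - d)]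
      · simp
    · intro d1 _ d2 _ hne
      simp only [Function.onFun]
      split_ifs with h1 h2 h2 <;> try simp
      rw [Finset.disjoint_left]
      rintro l hl1 hl2
      obtain ⟨t1, _, rfl⟩ := Finset.mem_image.mp hl1
      obtain ⟨t2, _, heq⟩ := Finset.mem_image.mp hl2
      apply hne
      have hhead : d2 / (2 * n + 1) = d1 / (2 * n + 1) := by
        injection heq
      have e1 : (2 * n + 1) * (d1 / (2 * n + 1)) = d1 := Nat.mul_div_cancel' h1
      have e2 : (2 * n + 1) * (d2 / (2 * n + 1)) = d2 := Nat.mul_div_cancel' h2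
      rw [← e1, ← e2, hhead]

lemma snd_build : ∀ (i : List ℕ) (s : ℕ), (build s i).map Prod.snd = i
  | [], _ => rfl
  | a :: t, s => by
    show (a :: (build (s + 2 * a) t).map Prod.snd) = a :: t
    rw [snd_build t]

lemma length_build (i : List ℕ) (s : ℕ) : (build s i).length = i.length := by
  have := congrArg List.length (snd_build i s)
  simpa using this

lemma sum_build : ∀ (i : List ℕ) (s : ℕ),
    ((build s i).map Prod.fst).sum = s * i.length + V i
  | [], s => by simp [build, V]
  | a :: t, s => by
    show (s + a) + ((build (s + 2 * a) t).map Prod.fst).sum = _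
    rw [sum_build t]
    show _ = s * (t.length + 1) + ((2 * t.length + 1) * a + V t)
    ring

lemma build_bounds : ∀ (i : List ℕ) (s : ℕ), (∀ x ∈ i, 1 ≤ x) →
    ∀ p ∈ build s i, 1 ≤ p.2 ∧ p.2 ≤ p.1
  | [], _, _ => by simp [build]
  | a :: t, s, h => by
    intro p hp
    rw [build_cons, List.mem_cons] at hp
    rcases hp with rfl | hp
    · exact ⟨h a (by simp), by simp⟩
    · exact build_bounds t _ (fun x hx => h x (List.mem_cons_of_mem _ hx)) p hp

lemma build_chain_lt : ∀ (i : List ℕ) (s : ℕ), (∀ x ∈ i, 1 ≤ x) →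
    (build s i).Chain' (fun p q => p.1 < q.1)
  | [], _, _ => List.isChain_nil
  | a :: t, s, h => by
    rw [build_cons, List.Chain', List.isChain_cons]
    refine ⟨?_, build_chain_lt t _ (fun x hx => h x (List.mem_cons_of_mem _ hx))⟩
    intro q hq
    cases t with
    | nil => simp [build_cons, build_nil] at hq
    | cons b t' =>
      have hb := h b (by simp)
      simp only [build_cons, List.head?_cons, Option.mem_def, Option.some.injEq] at hq
      subst hq
      show s + a < s + 2 * a + b
      omega

lemma build_wd : ∀ (i : List ℕ) (s : ℕ),
    (build s i).Chain' (fun p q => (q.1 : ℤ) - (p.1 : ℤ) - (q.2 : ℤ) - (p.2 : ℤ) = 0)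
  | [], _ => List.isChain_nil
  | a :: t, s => by
    rw [build_cons, List.Chain', List.isChain_cons]
    refine ⟨?_, build_wd t _⟩
    intro q hq
    cases t with
    | nil => simp [build_cons, build_nil] at hq
    | cons b t' =>
      simp only [build_cons, List.head?_cons, Option.mem_def, Option.some.injEq] at hq
      subst hq
      show ((s + 2 * a + b : ℕ) : ℤ) - ((s + a : ℕ) : ℤ) - (b : ℤ) - (a : ℤ) = 0
      push_cast
      ring

lemma build_eq : ∀ (l : List (ℕ × ℕ)) (s : ℕ),
    (∀ p : ℕ × ℕ, l.head? = some p → p.1 = s + p.2) →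
    l.Chain' (fun p q => (q.1 : ℤ) - (p.1 : ℤ) - (q.2 : ℤ) - (p.2 : ℤ) = 0) →
    build s (l.map Prod.snd) = l
  | [], _, _, _ => rfl
  | p :: t, s, hhead, hchain => by
    have hp : p.1 = s + p.2 := hhead p rfl
    rw [List.map_cons]
    show (s + p.2, p.2) :: build (s + 2 * p.2) (t.map Prod.snd) = p :: t
    have hch := List.isChain_cons.mp hchain
    congr 1
    · rw [← hp]
    · apply build_eq t (s + 2 * p.2) ?_ hch.2
      intro q hq
      have hrel := hch.1 q hq
      omega

lemma V_map_succ : ∀ i : List ℕ, V (i.map (· + 1)) = V i + i.length ^ 2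
  | [] => rfl
  | a :: t => by
    show (2 * (t.map (· + 1)).length + 1) * (a + 1) + V (t.map (· + 1)) = _
    rw [List.length_map, V_map_succ t]
    show _ = (2 * t.length + 1) * a + V t + (t.length + 1) ^ 2
    ring

/-- The generating series for multiples of `d`. -/
lemma mk_ind_mul (d : ℕ) (hd : 0 < d) :
    (PowerSeries.mk fun k => if d ∣ k then (1 : ℚ) else 0) *
      (1 - PowerSeries.X ^ d) = 1 := by
  ext m
  rw [mul_sub, mul_one, map_sub, PowerSeries.coeff_mul_X_pow', PowerSeries.coeff_mk,
    PowerSeries.coeff_one, PowerSeries.coeff_mk]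
  by_cases hm : m = 0
  · subst hm
    rw [if_pos (dvd_zero d), if_neg (by omega : ¬ d ≤ 0), if_pos rfl]
    ring
  · rw [if_neg hm]
    by_cases hdm : d ∣ m
    · have hle : d ≤ m := Nat.le_of_dvd (by omega) hdm
      rw [if_pos hdm, if_pos hle, if_pos (Nat.dvd_sub hdm dvd_rfl)]
      ring
    · rw [if_neg hdm]
      by_cases hle : d ≤ m
      · rw [if_pos hle, if_neg (fun hdvd => hdm (by
          have := Nat.dvd_add hdvd (dvd_refl d)
          rwa [Nat.sub_add_cancel hle] at this)), sub_zero]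
      · rw [if_neg hle]
        ring

lemma prod_inv (n : ℕ) :
    (∏ i ∈ Finset.range n, (1 - (PowerSeries.X : PowerSeries ℚ) ^ (2 * i + 1)))⁻¹ =
      ∏ i ∈ Finset.range n,
        PowerSeries.mk fun k => if (2 * i + 1) ∣ k then (1 : ℚ) else 0 := by
  rw [eq_comm, PowerSeries.eq_inv_iff_mul_eq_one]
  · rw [← Finset.prod_mul_distrib]
    exact Finset.prod_eq_one fun i _ => mk_ind_mul _ (by omega)
  · rw [map_prod]
    rw [Finset.prod_eq_one fun i _ => by
      simp [PowerSeries.constantCoeff_X]]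
    exact one_ne_zero

lemma coeff_prod_g : ∀ n M, PowerSeries.coeff M
    (∏ i ∈ Finset.range n,
      PowerSeries.mk fun k => if (2 * i + 1) ∣ k then (1 : ℚ) else 0) = L n M
  | 0, M => by
    rw [Finset.prod_range_zero, PowerSeries.coeff_one, L_zero]
    split_ifs <;> simp
  | n + 1, M => by
    rw [Finset.prod_range_succ, mul_comm, PowerSeries.coeff_mul,
      Finset.Nat.sum_antidiagonal_eq_sum_range_succ_mk, L_succ, Nat.cast_sum]
    refine Finset.sum_congr rfl fun k hk => ?_
    rw [coeff_prod_g n (M - k), PowerSeries.coeff_mk]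
    split_ifs <;> simp

lemma build_head (i : List ℕ) (p : ℕ × ℕ) :
    (build 0 i).head? = some p → p.1 = p.2 := by
  cases i with
  | nil => simp [build_nil]
  | cons a t =>
    rw [build_cons, List.head?_cons, Option.some.injEq]
    rintro rfl
    simp

end Stmt17Aux

open Stmt17Aux in
theorem stmt17 (v : ℕ) (hv : 0 < v) :
    ({l : List (ℕ × ℕ) | l.Pairwise LexLe ∧ (∀ p ∈ l, 1 ≤ p.2 ∧ p.2 ≤ p.1) ∧
      (∀ p : ℕ × ℕ, l.head? = some p → p.1 = p.2) ∧
      l.Chain' (fun p q => (q.1 : ℤ) - (p.1 : ℤ) - (q.2 : ℤ) - (p.2 : ℤ) = 0) ∧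
      (l.map Prod.fst).sum = v}.ncard : ℚ) =
    PowerSeries.coeff v (∑ n ∈ Finset.range (v + 1),
      (PowerSeries.X : PowerSeries ℚ) ^ (n ^ 2) *
        (∏ i ∈ Finset.range n, (1 - (PowerSeries.X : PowerSeries ℚ) ^ (2 * i + 1)))⁻¹) := by
  classical
  set G : Finset (List (ℕ × ℕ)) := (range (v + 1)).biUnion fun n =>
    if n ^ 2 ≤ v then (F n (v - n ^ 2)).image (fun b => build 0 (b.map (· + 1))) else ∅
    with hGdef
  -- the set equals ↑G
  have hset : {l : List (ℕ × ℕ) | l.Pairwise LexLe ∧ (∀ p ∈ l, 1 ≤ p.2 ∧ p.2 ≤ p.1) ∧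
      (∀ p : ℕ × ℕ, l.head? = some p → p.1 = p.2) ∧
      l.Chain' (fun p q => (q.1 : ℤ) - (p.1 : ℤ) - (q.2 : ℤ) - (p.2 : ℤ) = 0) ∧
      (l.map Prod.fst).sum = v} = ↑G := by
    ext l
    simp only [Set.mem_setOf_eq, Finset.mem_coe, hGdef, Finset.mem_biUnion, Finset.mem_range]
    constructor
    · rintro ⟨hsort, hbd, hhead, hch, hsum⟩
      have hbuild : build 0 (l.map Prod.snd) = l :=
        build_eq l 0 (fun p hp => by have := hhead p hp; omega) hch
      set i := l.map Prod.snd with hi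
      have hpos : ∀ x ∈ i, 1 ≤ x := by
        intro x hx
        obtain ⟨p, hp, rfl⟩ := List.mem_map.mp hx
        exact (hbd p hp).1
      have hV : V i = v := by
        have := sum_build i 0
        rw [hbuild, hsum] at this
        omega
      set b := i.map (· - 1) with hb
      have hbi : b.map (· + 1) = i := by
        rw [hb, List.map_map]
        have : ∀ x ∈ i, ((· + 1) ∘ (· - 1)) x = id x := by
          intro x hx
          have := hpos x hx
          simp only [Function.comp_apply, id_eq]
          omega
        rw [List.map_congr_left this, List.map_id]
      have hlenb : b.length = i.length := by rw [hb, List.length_map]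
      have hVb : V b + i.length ^ 2 = v := by
        rw [← hV, ← hbi, V_map_succ, hlenb, hbi]
      have hn2 : i.length ^ 2 ≤ v := by omega
      have hnv : i.length ≤ v := le_trans (Nat.le_self_pow two_ne_zero _) hn2
      refine ⟨i.length, by omega, ?_⟩
      rw [if_pos hn2]
      refine Finset.mem_image.mpr ⟨b, (mem_F _ _ b).mpr ⟨hlenb, by omega⟩, ?_⟩
      rw [hbi, hbuild]
    · rintro ⟨n, hn, hl⟩
      split_ifs at hl with hn2
      · obtain ⟨b, hb, rfl⟩ := Finset.mem_image.mp hl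
        obtain ⟨hblen, hbV⟩ := (mem_F _ _ b).mp hb
        set i := b.map (· + 1) with hi
        have hpos : ∀ x ∈ i, 1 ≤ x := by
          intro x hx
          obtain ⟨y, _, rfl⟩ := List.mem_map.mp hx
          omega
        haveI : IsTrans (ℕ × ℕ) (fun p q : ℕ × ℕ => p.1 < q.1) :=
          ⟨fun _ _ _ h1 h2 => lt_trans h1 h2⟩
        refine ⟨?_, build_bounds i 0 hpos, ?_, build_wd i 0, ?_⟩
        · have hpair : (build 0 i).Pairwise (fun p q => p.1 < q.1) :=
            List.isChain_iff_pairwise.mp (build_chain_lt i 0 hpos)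
          exact hpair.imp fun h => Or.inl h
        · exact build_head i
        · rw [sum_build i 0, hi, V_map_succ, hblen, hbV]
          omega
      · simp at hl
  rw [hset, Set.ncard_coe_finset]
  -- compute the cardinality of G
  have hinj : Function.Injective (fun b : List ℕ => build 0 (b.map (· + 1))) := by
    intro b1 b2 h
    have h2 := congrArg (List.map Prod.snd) h
    simp only [snd_build] at h2
    exact List.map_injective_iff.mpr (fun x y hxy => by omega) h2
  have hG : G.card = ∑ n ∈ range (v + 1), if n ^ 2 ≤ v then L n (v - n ^ 2) else 0 := by
    rw [hGdef, Finset.card_biUnion]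
    · refine Finset.sum_congr rfl fun n _ => ?_
      split_ifs with h
      · rw [Finset.card_image_of_injective _ hinj, card_F]
      · simp
    · intro n1 _ n2 _ hne
      simp only [Function.onFun]
      split_ifs with h1 h2 h2 <;> try simp
      rw [Finset.disjoint_left]
      rintro l hl1 hl2
      obtain ⟨b1, hb1, rfl⟩ := Finset.mem_image.mp hl1
      obtain ⟨b2, hb2, heq⟩ := Finset.mem_image.mp hl2
      have len1 : (build 0 (b1.map (· + 1))).length = n1 := by
        rw [length_build, List.length_map, ((mem_F _ _ b1).mp hb1).1]
      have len2 : (build 0 (b2.map (· + 1))).length = n2 := by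
        rw [length_build, List.length_map, ((mem_F _ _ b2).mp hb2).1]
      rw [heq] at len2
      exact hne (len1 ▸ len2 ▸ rfl)
  rw [hG, map_sum]
  push_cast
  refine Finset.sum_congr rfl fun n _ => ?_
  rw [prod_inv, PowerSeries.coeff_X_pow_mul']
  split_ifs with h
  · rw [coeff_prod_g]
  · rfl
end
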